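/- arXiv:1511.07396 — 4 statements merged into one kernel-verified Lean document; each statement's English description precedes it below -/
import Mathlib

section
/- Assume a, b, c, d > 0 with either (b > c and a ≤ d) or (b ≥ c and a < d). Then for every x₀ ∈ (0,∞)², every ε > 0 and every T > 0, there exists r₀ such that for all r ≥ r₀, the exit time T_ε(r) := inf{ t ≥ 0 : x^r(t) ∉ (ε,∞)² } satisfies T_ε(r) ≤ T and T_ε(r) = inf{ t ≥ 0 : x₂^r(t) ≤ ε }; i.e. the flow started from r·x₀ exits 𝒟_ε = (ε,∞)² before time T and does so through its lower boundary (second coordinate reaching ε). -/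
open Real Set Filter ENNReal

/-- The competitive Lotka–Volterra vector field. -/
def bLV (τ₁ τ₂ a b c d : ℝ) (x : ℝ × ℝ) : ℝ × ℝ :=
  (x.1 * (τ₁ - a * x.1 - c * x.2), x.2 * (τ₂ - b * x.2 - d * x.1))

/-- Exit time of `t ↦ X r t` from the domain `𝒟_ε = (ε,∞)²`
(with values in `ℝ≥0∞`, `inf ∅ = ∞`). -/
noncomputable def exitT (X : ℝ → ℝ → ℝ × ℝ) (ε r : ℝ) : ℝ≥0∞ :=
  sInf (ENNReal.ofReal '' {t : ℝ | 0 ≤ t ∧ ¬(ε < (X r t).1 ∧ ε < (X r t).2)})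

lemma expForm {f φ : ℝ → ℝ} (hφ : Continuous φ)
    (hf : ∀ t, 0 ≤ t → HasDerivAt f (f t * φ t) t) {t : ℝ} (ht : 0 ≤ t) :
    f t = f 0 * Real.exp (∫ s in (0:ℝ)..t, φ s) := by
  set F : ℝ → ℝ := fun u => ∫ s in (0:ℝ)..u, φ s with hFdef
  have hFd : ∀ u : ℝ, HasDerivAt F (φ u) u := fun u =>
    (hφ.integral_hasStrictDerivAt 0 u).hasDerivAt
  have hFc : Continuous F := by
    have : Differentiable ℝ F := fun u => (hFd u).differentiableAt
    exact this.continuous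
  have hcont : ContinuousOn (fun u => f u * Real.exp (-(F u))) (Icc 0 t) := by
    apply ContinuousOn.mul
    · exact fun s hs => ((hf s hs.1).continuousAt).continuousWithinAt
    · exact ((hFc.neg).rexp).continuousOn
  have hder : ∀ x ∈ Ico (0:ℝ) t, HasDerivWithinAt (fun u => f u * Real.exp (-(F u))) 0 (Ici x) x := by
    intro x hx
    have h1 : HasDerivAt (fun u => f u * Real.exp (-(F u)))
        (f x * φ x * Real.exp (-(F x)) + f x * (Real.exp (-(F x)) * -(φ x))) x :=
      (hf x hx.1).mul ((hFd x).neg.exp)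
    have h2 : f x * φ x * Real.exp (-(F x)) + f x * (Real.exp (-(F x)) * -(φ x)) = 0 := by ring
    rw [h2] at h1
    exact h1.hasDerivWithinAt
  have hconst := constant_of_has_deriv_right_zero hcont hder t (by simp [ht])
  have hF0 : F 0 = 0 := intervalIntegral.integral_same
  simp only [hF0, neg_zero, Real.exp_zero, mul_one] at hconst
  have hexp : Real.exp (-(F t)) * Real.exp (F t) = 1 := by
    rw [← Real.exp_add]; simp
  calc f t = f t * Real.exp (-(F t)) * Real.exp (F t) := by
        rw [mul_assoc, hexp, mul_one]
    _ = f 0 * Real.exp (F t) := by rw [hconst]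

lemma basic (τ₁ τ₂ a b c d : ℝ) (ha : 0 < a) (hc : 0 < c)
    (x₀ : ℝ × ℝ) (hx₀ : 0 < x₀.1 ∧ 0 < x₀.2)
    (X : ℝ → ℝ → ℝ × ℝ)
    (hX0 : ∀ r : ℝ, 0 < r → X r 0 = (r * x₀.1, r * x₀.2))
    (hXmem : ∀ r : ℝ, 0 < r → ∀ t : ℝ, 0 ≤ t → 0 ≤ (X r t).1 ∧ 0 ≤ (X r t).2)
    (hXder : ∀ r : ℝ, 0 < r → ∀ t : ℝ, 0 ≤ t →
      HasDerivAt (X r) (bLV τ₁ τ₂ a b c d (X r t)) t)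
    (T : ℝ) (hT : 0 < T) (r : ℝ) (hr : 0 < r) :
    ∃ A B : ℝ → ℝ,
      (∀ t, 0 ≤ t → 0 < (X r t).1) ∧
      (∀ t, 0 ≤ t → 0 < (X r t).2) ∧
      (∀ t, 0 ≤ t → Real.log ((X r t).1)
          = Real.log r + Real.log x₀.1 + τ₁*t - (a*A t + c*B t)) ∧
      (∀ t, 0 ≤ t → Real.log ((X r t).2)
          = Real.log r + Real.log x₀.2 + τ₂*t - (b*B t + d*A t)) ∧
      (∀ t, 0 ≤ t → 0 ≤ A t) ∧ (∀ t, 0 ≤ t → 0 ≤ B t) ∧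
      (∀ s t, 0 ≤ s → s ≤ t → B s ≤ B t) ∧
      (∀ t κ, 0 ≤ t → (∀ s, 0 ≤ s → s ≤ t → κ * (X r s).1 ≤ (X r s).2) → κ * A t ≤ B t) ∧
      (∀ t κ, 0 ≤ t → 0 ≤ κ → (∀ s, 0 ≤ s → s ≤ t → (X r s).2 ≤ κ * (X r s).1) → B t ≤ κ * A t) ∧
      (X r T).1 ≤ Real.exp (τ₁*T) / (a * min 1 (Real.exp (τ₁*T)) * T) := by
  -- continuity of the solution on [0,∞)
  have hXcont : ContinuousOn (X r) (Ici 0) := fun t ht =>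
    ((hXder r hr t ht).continuousAt).continuousWithinAt
  have hmax : Continuous (fun s : ℝ => max s 0) := continuous_id.max continuous_const
  have hmaxmem : ∀ s : ℝ, max s 0 ∈ Ici (0:ℝ) := fun s => le_max_right s 0
  have hCmax : Continuous (fun s : ℝ => X r (max s 0)) :=
    hXcont.comp_continuous hmax hmaxmem
  set F1 : ℝ → ℝ := fun s => (X r (max s 0)).1 with hF1def
  set G1 : ℝ → ℝ := fun s => (X r (max s 0)).2 with hG1def
  have hF1c : Continuous F1 := continuous_fst.comp hCmax
  have hG1c : Continuous G1 := continuous_snd.comp hCmax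
  have hF1nn : ∀ s, 0 ≤ F1 s := fun s => (hXmem r hr _ (hmaxmem s)).1
  have hG1nn : ∀ s, 0 ≤ G1 s := fun s => (hXmem r hr _ (hmaxmem s)).2
  set φ1 : ℝ → ℝ := fun s => τ₁ - a * F1 s - c * G1 s with hφ1def
  set φ2 : ℝ → ℝ := fun s => τ₂ - b * G1 s - d * F1 s with hφ2def
  have hφ1c : Continuous φ1 := by
    exact (continuous_const.sub (continuous_const.mul hF1c)).sub (continuous_const.mul hG1c)
  have hφ2c : Continuous φ2 := by
    exact (continuous_const.sub (continuous_const.mul hG1c)).sub (continuous_const.mul hF1c)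
  -- component derivatives
  have hd1 : ∀ t, 0 ≤ t → HasDerivAt (fun t => (X r t).1) ((X r t).1 * φ1 t) t := by
    intro t ht
    have h := ((ContinuousLinearMap.fst ℝ ℝ ℝ).hasFDerivAt).comp_hasDerivAt t (hXder r hr t ht)
    have he : (ContinuousLinearMap.fst ℝ ℝ ℝ) (bLV τ₁ τ₂ a b c d (X r t))
        = (X r t).1 * φ1 t := by
      simp [bLV, hφ1def, hF1def, hG1def, max_eq_left ht]
    rw [he] at h
    exact h
  have hd2 : ∀ t, 0 ≤ t → HasDerivAt (fun t => (X r t).2) ((X r t).2 * φ2 t) t := by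
    intro t ht
    have h := ((ContinuousLinearMap.snd ℝ ℝ ℝ).hasFDerivAt).comp_hasDerivAt t (hXder r hr t ht)
    have he : (ContinuousLinearMap.snd ℝ ℝ ℝ) (bLV τ₁ τ₂ a b c d (X r t))
        = (X r t).2 * φ2 t := by
      simp [bLV, hφ2def, hF1def, hG1def, max_eq_left ht]
    rw [he] at h
    exact h
  -- integrals
  set A : ℝ → ℝ := fun t => ∫ s in (0:ℝ)..t, F1 s with hAdef
  set B : ℝ → ℝ := fun t => ∫ s in (0:ℝ)..t, G1 s with hBdef
  have hInt1 : ∀ t, ∫ s in (0:ℝ)..t, φ1 s = τ₁*t - (a * A t + c * B t) := by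
    intro t
    have i1 : IntervalIntegrable (fun s => a * F1 s) MeasureTheory.volume 0 t :=
      (continuous_const.mul hF1c).intervalIntegrable 0 t
    have i2 : IntervalIntegrable (fun s => c * G1 s) MeasureTheory.volume 0 t :=
      (continuous_const.mul hG1c).intervalIntegrable 0 t
    have : ∫ s in (0:ℝ)..t, φ1 s
        = (∫ s in (0:ℝ)..t, (τ₁ - a * F1 s)) - ∫ s in (0:ℝ)..t, c * G1 s := by
      rw [← intervalIntegral.integral_sub (by have h : IntervalIntegrable (fun s => τ₁ - a * F1 s) MeasureTheory.volume 0 t := (continuous_const.sub (continuous_const.mul hF1c)).intervalIntegrable 0 t; exact h) i2]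
    rw [this, intervalIntegral.integral_sub (continuous_const.intervalIntegrable 0 t) i1,
      intervalIntegral.integral_const, intervalIntegral.integral_const_mul,
      intervalIntegral.integral_const_mul]
    simp [hAdef, hBdef]
    ring
  have hInt2 : ∀ t, ∫ s in (0:ℝ)..t, φ2 s = τ₂*t - (b * B t + d * A t) := by
    intro t
    have i1 : IntervalIntegrable (fun s => b * G1 s) MeasureTheory.volume 0 t :=
      (continuous_const.mul hG1c).intervalIntegrable 0 t
    have i2 : IntervalIntegrable (fun s => d * F1 s) MeasureTheory.volume 0 t :=
      (continuous_const.mul hF1c).intervalIntegrable 0 t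
    have : ∫ s in (0:ℝ)..t, φ2 s
        = (∫ s in (0:ℝ)..t, (τ₂ - b * G1 s)) - ∫ s in (0:ℝ)..t, d * F1 s := by
      rw [← intervalIntegral.integral_sub (by have h : IntervalIntegrable (fun s => τ₂ - b * G1 s) MeasureTheory.volume 0 t := (continuous_const.sub (continuous_const.mul hG1c)).intervalIntegrable 0 t; exact h) i2]
    rw [this, intervalIntegral.integral_sub (continuous_const.intervalIntegrable 0 t) i1,
      intervalIntegral.integral_const, intervalIntegral.integral_const_mul,
      intervalIntegral.integral_const_mul]
    simp [hAdef, hBdef]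
    ring
  -- exponential form
  have hx10 : (X r 0).1 = r * x₀.1 := by rw [hX0 r hr]
  have hx20 : (X r 0).2 = r * x₀.2 := by rw [hX0 r hr]
  have hx10pos : 0 < (X r 0).1 := by rw [hx10]; exact mul_pos hr hx₀.1
  have hx20pos : 0 < (X r 0).2 := by rw [hx20]; exact mul_pos hr hx₀.2
  have hef : ∀ t, 0 ≤ t →
      (X r t).1 = (X r 0).1 * Real.exp (τ₁*t - (a * A t + c * B t)) := by
    intro t ht
    have := expForm hφ1c hd1 ht
    rwa [hInt1 t] at this
  have heg : ∀ t, 0 ≤ t →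
      (X r t).2 = (X r 0).2 * Real.exp (τ₂*t - (b * B t + d * A t)) := by
    intro t ht
    have := expForm hφ2c hd2 ht
    rwa [hInt2 t] at this
  have hfpos : ∀ t, 0 ≤ t → 0 < (X r t).1 := fun t ht => by
    rw [hef t ht]; exact mul_pos hx10pos (Real.exp_pos _)
  have hgpos : ∀ t, 0 ≤ t → 0 < (X r t).2 := fun t ht => by
    rw [heg t ht]; exact mul_pos hx20pos (Real.exp_pos _)
  have hu : ∀ t, 0 ≤ t → Real.log ((X r t).1)
      = Real.log r + Real.log x₀.1 + τ₁*t - (a*A t + c*B t) := by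
    intro t ht
    rw [hef t ht, Real.log_mul (ne_of_gt hx10pos) (ne_of_gt (Real.exp_pos _)),
      Real.log_exp, hx10, Real.log_mul (ne_of_gt hr) (ne_of_gt hx₀.1)]
    ring
  have hv : ∀ t, 0 ≤ t → Real.log ((X r t).2)
      = Real.log r + Real.log x₀.2 + τ₂*t - (b*B t + d*A t) := by
    intro t ht
    rw [heg t ht, Real.log_mul (ne_of_gt hx20pos) (ne_of_gt (Real.exp_pos _)),
      Real.log_exp, hx20, Real.log_mul (ne_of_gt hr) (ne_of_gt hx₀.2)]
    ring
  have hA0 : ∀ t, 0 ≤ t → 0 ≤ A t := fun t ht =>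
    intervalIntegral.integral_nonneg ht (fun s _ => hF1nn s)
  have hB0 : ∀ t, 0 ≤ t → 0 ≤ B t := fun t ht =>
    intervalIntegral.integral_nonneg ht (fun s _ => hG1nn s)
  have hBmono : ∀ s t, 0 ≤ s → s ≤ t → B s ≤ B t := by
    intro s t hs hst
    have h1 : B t - B s = ∫ u in s..t, G1 u := by
      rw [hBdef]
      exact intervalIntegral.integral_interval_sub_left (hG1c.intervalIntegrable 0 t)
        (hG1c.intervalIntegrable 0 s)
    have h2 : 0 ≤ ∫ u in s..t, G1 u :=
      intervalIntegral.integral_nonneg hst (fun u _ => hG1nn u)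
    linarith [h1 ▸ h2]
  have hcompBA : ∀ t κ, 0 ≤ t → (∀ s, 0 ≤ s → s ≤ t → κ * (X r s).1 ≤ (X r s).2) →
      κ * A t ≤ B t := by
    intro t κ ht hcmp
    have h1 : κ * A t = ∫ s in (0:ℝ)..t, κ * F1 s := by
      rw [hAdef]; simp only; rw [intervalIntegral.integral_const_mul]
    rw [h1, hBdef]
    apply intervalIntegral.integral_mono_on ht
      (by have h : IntervalIntegrable (fun s => κ * F1 s) MeasureTheory.volume 0 t := (continuous_const.mul hF1c).intervalIntegrable 0 t; exact h)
      (hG1c.intervalIntegrable 0 t)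
    intro s hs
    have hmx : max s 0 = s := max_eq_left hs.1
    simp only [hF1def, hG1def, hmx]
    exact hcmp s hs.1 (le_trans hs.2 le_rfl)
  have hcompAB : ∀ t κ, 0 ≤ t → 0 ≤ κ → (∀ s, 0 ≤ s → s ≤ t → (X r s).2 ≤ κ * (X r s).1) →
      B t ≤ κ * A t := by
    intro t κ ht hκ hcmp
    have h1 : κ * A t = ∫ s in (0:ℝ)..t, κ * F1 s := by
      rw [hAdef]; simp only; rw [intervalIntegral.integral_const_mul]
    rw [h1, hBdef]
    apply intervalIntegral.integral_mono_on ht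
      (hG1c.intervalIntegrable 0 t)
      (by have h : IntervalIntegrable (fun s => κ * F1 s) MeasureTheory.volume 0 t := (continuous_const.mul hF1c).intervalIntegrable 0 t; exact h)
    intro s hs
    have hmx : max s 0 = s := max_eq_left hs.1
    simp only [hF1def, hG1def, hmx]
    exact hcmp s hs.1 hs.2
  -- crash bound at time T
  set m : ℝ := min 1 (Real.exp (τ₁*T)) with hmdef
  have hm0 : 0 < m := lt_min one_pos (Real.exp_pos _)
  set E : ℝ → ℝ := fun t => Real.exp (τ₁*t) / (X r t).1 with hEdef
  set Ed : ℝ → ℝ := fun t =>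
    (Real.exp (τ₁*t) * (τ₁*1) * (X r t).1 - Real.exp (τ₁*t) * ((X r t).1 * φ1 t)) / (X r t).1^2
    with hEddef
  have hED : ∀ t, 0 ≤ t → HasDerivAt E (Ed t) t := by
    intro t ht
    have hexp : HasDerivAt (fun y : ℝ => Real.exp (τ₁*y)) (Real.exp (τ₁*t) * (τ₁*1)) t :=
      ((hasDerivAt_id t).const_mul τ₁).exp
    exact hexp.div (hd1 t ht) (ne_of_gt (hfpos t ht))
  have hEdlb : ∀ t, 0 ≤ t → t ≤ T → a * m ≤ Ed t := by
    intro t ht htT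
    have hf := hfpos t ht
    have hg := (hXmem r hr t ht).2
    have hme : m ≤ Real.exp (τ₁*t) := by
      rcases le_total 0 τ₁ with h | h
      · exact le_trans (min_le_left _ _) (Real.one_le_exp (by positivity))
      · refine le_trans (min_le_right _ _) (Real.exp_le_exp.2 ?_)
        exact mul_le_mul_of_nonpos_left htT h
    have hrw : Ed t = Real.exp (τ₁*t) * (a * (X r t).1 + c * (X r t).2) / (X r t).1 := by
      rw [hEddef]
      simp only [hφ1def, hF1def, hG1def, max_eq_left ht]
      field_simp
      ring
    rw [hrw, le_div_iff₀ hf]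
    nlinarith [mul_le_mul_of_nonneg_right hme (le_of_lt (mul_pos ha hf)),
      mul_nonneg (le_of_lt (Real.exp_pos (τ₁*t))) (mul_nonneg (le_of_lt hc) hg)]
  have hmono : MonotoneOn (fun t => E t - a*m*t) (Icc 0 T) := by
    apply monotoneOn_of_deriv_nonneg (convex_Icc 0 T)
    · apply ContinuousOn.sub
      · exact fun t htI => ((hED t htI.1).continuousAt).continuousWithinAt
      · exact (continuous_const.mul continuous_id).continuousOn
    · rw [interior_Icc]
      intro t htI
      have : HasDerivAt (fun t => E t - a*m*t) (Ed t - a*m*1) t :=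
        (hED t (le_of_lt htI.1)).sub ((hasDerivAt_id t).const_mul (a*m))
      exact this.differentiableAt.differentiableWithinAt
    · rw [interior_Icc]
      intro t htI
      have hder : HasDerivAt (fun t => E t - a*m*t) (Ed t - a*m*1) t :=
        (hED t (le_of_lt htI.1)).sub ((hasDerivAt_id t).const_mul (a*m))
      rw [hder.deriv]
      have := hEdlb t (le_of_lt htI.1) (le_of_lt htI.2)
      linarith
  have hcrash : (X r T).1 ≤ Real.exp (τ₁*T) / (a * m * T) := by
    have h0T : (0:ℝ) ∈ Icc (0:ℝ) T := ⟨le_rfl, le_of_lt hT⟩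
    have hTT : T ∈ Icc (0:ℝ) T := ⟨le_of_lt hT, le_rfl⟩
    have hmon := hmono h0T hTT (le_of_lt hT)
    simp only at hmon
    have hE0 : 0 ≤ E 0 := le_of_lt (div_pos (Real.exp_pos _) hx10pos)
    have hET : a*m*T ≤ E T := by
      have : E 0 - a*m*0 = E 0 := by ring
      nlinarith
    have hETpos : 0 < E T := lt_of_lt_of_le (by positivity) hET
    have hfT : (X r T).1 = Real.exp (τ₁*T) / E T := by
      rw [hEdef]
      field_simp
    rw [hfT]
    exact div_le_div_of_nonneg_left (le_of_lt (Real.exp_pos _)) (by positivity) hET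
  exact ⟨A, B, hfpos, hgpos, hu, hv, hA0, hB0, hBmono, hcompBA, hcompAB, hcrash⟩

lemma absmul (τ t T : ℝ) (ht : 0 ≤ t) (htT : t ≤ T) : -(|τ| * T) ≤ τ*t ∧ τ*t ≤ |τ| * T := by
  have h1 := mul_le_mul_of_nonneg_right (le_abs_self τ) ht
  have h2 := mul_le_mul_of_nonneg_right (neg_abs_le τ) ht
  have h3 := mul_le_mul_of_nonneg_left htT (abs_nonneg τ)
  constructor <;> nlinarith


set_option maxHeartbeats 2000000 in
lemma key (τ₁ τ₂ a b c d : ℝ) (ha : 0 < a) (hb : 0 < b) (hc : 0 < c) (hd : 0 < d)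
    (hcase : (c < b ∧ a ≤ d) ∨ (c ≤ b ∧ a < d))
    (x₀ : ℝ × ℝ) (hx₀ : 0 < x₀.1 ∧ 0 < x₀.2)
    (X : ℝ → ℝ → ℝ × ℝ)
    (hX0 : ∀ r : ℝ, 0 < r → X r 0 = (r * x₀.1, r * x₀.2))
    (hXmem : ∀ r : ℝ, 0 < r → ∀ t : ℝ, 0 ≤ t → 0 ≤ (X r t).1 ∧ 0 ≤ (X r t).2)
    (hXder : ∀ r : ℝ, 0 < r → ∀ t : ℝ, 0 ≤ t →
      HasDerivAt (X r) (bLV τ₁ τ₂ a b c d (X r t)) t)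
    (ε T : ℝ) (hε : 0 < ε) (hT : 0 < T) :
    ∃ r₀ : ℝ, 0 < r₀ ∧ ∀ r : ℝ, r₀ ≤ r →
      (∃ t, 0 ≤ t ∧ t ≤ T ∧ (X r t).2 ≤ ε) ∧
      (∀ t, 0 ≤ t → t ≤ T → (∀ s, 0 ≤ s → s ≤ t → ε < (X r s).2) → ε < (X r t).1) := by
  have hbasic := basic τ₁ τ₂ a b c d ha hc x₀ hx₀ X hX0 hXmem hXder T hT
  obtain ⟨K, hKdef⟩ : ∃ x : ℝ, x = Real.exp (τ₁*T) / (a * min 1 (Real.exp (τ₁*T)) * T) := ⟨_, rfl⟩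
  have hK0 : 0 < K := by
    rw [hKdef]
    have hm : (0:ℝ) < min 1 (Real.exp (τ₁*T)) := lt_min one_pos (Real.exp_pos _)
    exact div_pos (Real.exp_pos _) (mul_pos (mul_pos ha hm) hT)
  obtain ⟨lp1, hlp1def⟩ : ∃ x : ℝ, x = Real.log x₀.1 := ⟨_, rfl⟩
  obtain ⟨lp2, hlp2def⟩ : ∃ x : ℝ, x = Real.log x₀.2 := ⟨_, rfl⟩
  obtain ⟨lε, hlεdef⟩ : ∃ x : ℝ, x = Real.log ε := ⟨_, rfl⟩
  obtain ⟨M₁, hM₁def⟩ : ∃ x : ℝ, x = |τ₁| * T := ⟨_, rfl⟩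
  obtain ⟨M₂, hM₂def⟩ : ∃ x : ℝ, x = |τ₂| * T := ⟨_, rfl⟩
  obtain ⟨M₀, hM₀def⟩ : ∃ x : ℝ, x = |τ₂-τ₁| * T := ⟨_, rfl⟩
  obtain ⟨C₂, hC₂def⟩ : ∃ x : ℝ, x = lp2 - lε + M₂ := ⟨_, rfl⟩
  obtain ⟨C₄, hC₄def⟩ : ∃ x : ℝ, x = Real.log K - lp1 + M₁ := ⟨_, rfl⟩
  have hcases3 : (a < d ∧ c < b) ∨ (a = d ∧ c < b) ∨ (c = b ∧ a < d) := by
    rcases hcase with ⟨h1, h2⟩ | ⟨h1, h2⟩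
    · rcases lt_or_eq_of_le h2 with h | h
      · exact Or.inl ⟨h, h1⟩
      · exact Or.inr (Or.inl ⟨h, h1⟩)
    · rcases lt_or_eq_of_le h1 with h | h
      · exact Or.inl ⟨h2, h⟩
      · exact Or.inr (Or.inr ⟨h, h2⟩)
  rcases hcases3 with ⟨had, hcb⟩ | ⟨had, hcb⟩ | ⟨hcb, had⟩
  -- CASE I : a < d, c < b
  · obtain ⟨lam, hlamdef⟩ : ∃ x : ℝ, x = max (a/d) (c/b) := ⟨_, rfl⟩
    have hlam1 : lam < 1 := by
      rw [hlamdef]; exact max_lt ((div_lt_one hd).2 had) ((div_lt_one hb).2 hcb)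
    have hlam0 : 0 ≤ lam := by
      rw [hlamdef]; exact le_trans (le_of_lt (div_pos ha hd)) (le_max_left _ _)
    have h1lam : (0:ℝ) < 1 - lam := by linarith
    have ha' : a ≤ lam * d := by
      rw [hlamdef]
      have h := le_max_left (a/d) (c/b)
      calc a = (a/d)*d := by field_simp
        _ ≤ max (a/d) (c/b) * d := mul_le_mul_of_nonneg_right h (le_of_lt hd)
    have hc' : c ≤ lam * b := by
      rw [hlamdef]
      have h := le_max_right (a/d) (c/b)
      calc c = (c/b)*b := by field_simp
        _ ≤ max (a/d) (c/b) * b := mul_le_mul_of_nonneg_right h (le_of_lt hb)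
    obtain ⟨LI, hLIdef⟩ : ∃ x : ℝ, x = max ((lε - lp1 + M₁ + lam*C₂)/(1-lam)) ((C₄ + lam*C₂)/(1-lam)) + 1 := ⟨_, rfl⟩
    refine ⟨max 1 (Real.exp LI), lt_of_lt_of_le one_pos (le_max_left _ _), ?_⟩
    intro r hr
    have hr0 : 0 < r := lt_of_lt_of_le one_pos (le_trans (le_max_left _ _) hr)
    have hLr : LI ≤ Real.log r :=
      (Real.le_log_iff_exp_le hr0).2 (le_trans (le_max_right _ _) hr)
    obtain ⟨A, B, hfpos, hgpos, hu, hv, hA0, hB0, hBmono, hcompBA, hcompAB, hcrash⟩ :=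
      hbasic r hr0
    have hcrashK : (X r T).1 ≤ K := by rw [hKdef]; exact hcrash
    have h2 : ∀ t, 0 ≤ t → t ≤ T → ε < (X r t).2 → b*B t + d*A t < (Real.log r) + C₂ := by
      intro t ht htT hgt
      have hvt := hv t ht
      have hlog : lε < Real.log ((X r t).2) := by rw [hlεdef]; exact Real.log_lt_log hε hgt
      have habs := (absmul τ₂ t T ht htT).2
      linarith
    constructor
    · by_contra hcon
      push_neg at hcon
      have h2T := h2 T (le_of_lt hT) le_rfl (hcon T (le_of_lt hT) le_rfl)
      have huT := hu T (le_of_lt hT)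
      have hlogK : Real.log ((X r T).1) ≤ Real.log K :=
        (Real.log_le_log_iff (hfpos T (le_of_lt hT)) hK0).2 hcrashK
      have habs := (absmul τ₁ T T (le_of_lt hT) le_rfl).1
      have h5 : (Real.log r) - C₄ ≤ a*A T + c*B T := by linarith
      have h3 : a*A T + c*B T ≤ lam*(b*B T + d*A T) := by
        nlinarith [mul_le_mul_of_nonneg_right ha' (hA0 T (le_of_lt hT)),
          mul_le_mul_of_nonneg_right hc' (hB0 T (le_of_lt hT))]
      have h4 : lam*(b*B T + d*A T) ≤ lam*((Real.log r) + C₂) :=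
        mul_le_mul_of_nonneg_left (le_of_lt h2T) hlam0
      have h6 : (C₄ + lam*C₂)/(1-lam) < (Real.log r) := by
        have hm := le_max_right ((lε - lp1 + M₁ + lam*C₂)/(1-lam)) ((C₄ + lam*C₂)/(1-lam))
        linarith
      have h7 : C₄ + lam*C₂ < (1-lam)*(Real.log r) := by
        have := (div_lt_iff₀ h1lam).1 h6
        linarith
      nlinarith
    · intro t ht htT hyp
      have hgt := hyp t ht le_rfl
      have h2t := h2 t ht htT hgt
      have hut := hu t ht
      have habs := (absmul τ₁ t T ht htT).1
      have h3 : a*A t + c*B t ≤ lam*(b*B t + d*A t) := by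
        nlinarith [mul_le_mul_of_nonneg_right ha' (hA0 t ht),
          mul_le_mul_of_nonneg_right hc' (hB0 t ht)]
      have h4 : lam*(b*B t + d*A t) ≤ lam*((Real.log r) + C₂) :=
        mul_le_mul_of_nonneg_left (le_of_lt h2t) hlam0
      have h6 : (lε - lp1 + M₁ + lam*C₂)/(1-lam) < (Real.log r) := by
        have hm := le_max_left ((lε - lp1 + M₁ + lam*C₂)/(1-lam)) ((C₄ + lam*C₂)/(1-lam))
        linarith
      have h7 : lε - lp1 + M₁ + lam*C₂ < (1-lam)*(Real.log r) := by
        have := (div_lt_iff₀ h1lam).1 h6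
        linarith
      have hfin : lε < Real.log ((X r t).1) := by nlinarith
      exact (Real.log_lt_log_iff hε (hfpos t ht)).1 (by rw [← hlεdef]; exact hfin)
  -- CASE II : a = d, c < b
  · have hbc : (0:ℝ) < b - c := sub_pos.2 hcb
    obtain ⟨B₀, hB₀def⟩ : ∃ x : ℝ, x = max 0 ((lp2 - lp1 + M₀)/(b-c)) := ⟨_, rfl⟩
    have hB₀0 : (0:ℝ) ≤ B₀ := by rw [hB₀def]; exact le_max_left _ _
    have hB₀' : lp2 - lp1 + M₀ ≤ (b-c)*B₀ := by
      rw [hB₀def]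
      have h := le_max_right (0:ℝ) ((lp2 - lp1 + M₀)/(b-c))
      have := (div_le_iff₀ hbc).1 h
      linarith
    obtain ⟨w₁, hw₁def⟩ : ∃ x : ℝ, x = lp2 - lp1 - M₀ - (b-c)*B₀ := ⟨_, rfl⟩
    obtain ⟨A₀, hA₀def⟩ : ∃ x : ℝ, x = B₀ * Real.exp (-w₁) := ⟨_, rfl⟩
    obtain ⟨B₁, hB₁def⟩ : ∃ x : ℝ, x = max 0 ((C₂ + C₄)/(b-c)) := ⟨_, rfl⟩
    have hB₁0 : (0:ℝ) ≤ B₁ := by rw [hB₁def]; exact le_max_left _ _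
    have hB₁' : C₂ + C₄ ≤ (b-c)*B₁ := by
      rw [hB₁def]
      have h := le_max_right (0:ℝ) ((C₂ + C₄)/(b-c))
      have := (div_le_iff₀ hbc).1 h
      linarith
    obtain ⟨w₂, hw₂def⟩ : ∃ x : ℝ, x = lp2 - lp1 - M₀ - (b-c)*B₁ := ⟨_, rfl⟩
    obtain ⟨A₁, hA₁def⟩ : ∃ x : ℝ, x = B₁ * Real.exp (-w₂) := ⟨_, rfl⟩
    obtain ⟨LII, hLIIdef⟩ : ∃ x : ℝ, x = max (lε - lp1 + M₁ + a*A₀ + c*B₀) (C₄ + a*A₁ + c*B₁) + 1 := ⟨_, rfl⟩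
    refine ⟨max 1 (Real.exp LII), lt_of_lt_of_le one_pos (le_max_left _ _), ?_⟩
    intro r hr
    have hr0 : 0 < r := lt_of_lt_of_le one_pos (le_trans (le_max_left _ _) hr)
    have hLr : LII ≤ Real.log r :=
      (Real.le_log_iff_exp_le hr0).2 (le_trans (le_max_right _ _) hr)
    obtain ⟨A, B, hfpos, hgpos, hu, hv, hA0, hB0, hBmono, hcompBA, hcompAB, hcrash⟩ :=
      hbasic r hr0
    have hcrashK : (X r T).1 ≤ K := by rw [hKdef]; exact hcrash
    have h2 : ∀ t, 0 ≤ t → t ≤ T → ε < (X r t).2 → b*B t + d*A t < (Real.log r) + C₂ := by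
      intro t ht htT hgt
      have hvt := hv t ht
      have hlog : lε < Real.log ((X r t).2) := by rw [hlεdef]; exact Real.log_lt_log hε hgt
      have habs := (absmul τ₂ t T ht htT).2
      linarith
    have hW : ∀ t, 0 ≤ t → Real.log ((X r t).2)
        = Real.log ((X r t).1) + (lp2 - lp1) + (τ₂-τ₁)*t - (b-c)*B t := by
      intro t ht
      have h1 := hu t ht
      have h2' := hv t ht
      rw [← had] at h2'
      linarith
    have hptw : ∀ t Bbar, 0 ≤ t → t ≤ T → B t ≤ Bbar →
        Real.exp (lp2 - lp1 - M₀ - (b-c)*Bbar) * A t ≤ B t := by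
      intro t Bbar ht htT hBb
      apply hcompBA t _ ht
      intro s hs hst
      have hsT : s ≤ T := le_trans hst htT
      have hWs := hW s hs
      have habs := (absmul (τ₂-τ₁) s T hs hsT).1
      have hBs : B s ≤ Bbar := le_trans (hBmono s t hs hst) hBb
      have hmono2 : (b-c)*B s ≤ (b-c)*Bbar := mul_le_mul_of_nonneg_left hBs (le_of_lt hbc)
      have hlog : Real.log (Real.exp (lp2 - lp1 - M₀ - (b-c)*Bbar) * (X r s).1)
          ≤ Real.log ((X r s).2) := by
        rw [Real.log_mul (ne_of_gt (Real.exp_pos _)) (ne_of_gt (hfpos s hs)), Real.log_exp]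
        linarith
      exact (Real.log_le_log_iff (mul_pos (Real.exp_pos _) (hfpos s hs)) (hgpos s hs)).1 hlog
    constructor
    · by_contra hcon
      push_neg at hcon
      have hgT := hcon T (le_of_lt hT) le_rfl
      have h2T := h2 T (le_of_lt hT) le_rfl hgT
      have huT := hu T (le_of_lt hT)
      have hlogK : Real.log ((X r T).1) ≤ Real.log K :=
        (Real.log_le_log_iff (hfpos T (le_of_lt hT)) hK0).2 hcrashK
      have habs := (absmul τ₁ T T (le_of_lt hT) le_rfl).1
      have h5 : (Real.log r) - C₄ ≤ a*A T + c*B T := by linarith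
      have h8 : (b-c)*B T < C₂ + C₄ := by
        rw [← had] at h2T
        nlinarith
      have hBT : B T ≤ B₁ := by
        have h9 : (b-c)*B T ≤ (b-c)*B₁ := le_trans (le_of_lt h8) hB₁'
        exact le_of_mul_le_mul_left h9 hbc
      have h10 := hptw T B₁ (le_of_lt hT) le_rfl hBT
      rw [← hw₂def] at h10
      have hee : Real.exp (-w₂) * Real.exp w₂ = 1 := by
        rw [← Real.exp_add]; simp
      have hAT : A T ≤ A₁ := by
        rw [hA₁def]
        calc A T = (Real.exp (-w₂) * Real.exp w₂) * A T := by rw [hee]; ring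
          _ = Real.exp (-w₂) * (Real.exp w₂ * A T) := by ring
          _ ≤ Real.exp (-w₂) * B₁ :=
            mul_le_mul_of_nonneg_left (le_trans h10 hBT) (le_of_lt (Real.exp_pos _))
          _ = B₁ * Real.exp (-w₂) := by ring
      have h11 : a*A T ≤ a*A₁ := mul_le_mul_of_nonneg_left hAT (le_of_lt ha)
      have h12 : c*B T ≤ c*B₁ := mul_le_mul_of_nonneg_left hBT (le_of_lt hc)
      have hm := le_max_right (lε - lp1 + M₁ + a*A₀ + c*B₀) (C₄ + a*A₁ + c*B₁)
      linarith
    · intro t ht htT hyp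
      have hgt := hyp t ht le_rfl
      have hlogg : lε < Real.log ((X r t).2) := by rw [hlεdef]; exact Real.log_lt_log hε hgt
      have hWt := hW t ht
      by_cases hcase2 : lp2 - lp1 + M₀ ≤ (b-c)*B t
      · have habs := (absmul (τ₂-τ₁) t T ht htT).2
        have hfin : lε < Real.log ((X r t).1) := by linarith
        exact (Real.log_lt_log_iff hε (hfpos t ht)).1 (by rw [← hlεdef]; exact hfin)
      · push_neg at hcase2
        have hBt : B t ≤ B₀ := by
          have h9 : (b-c)*B t ≤ (b-c)*B₀ := le_trans (le_of_lt hcase2) hB₀'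
          exact le_of_mul_le_mul_left h9 hbc
        have h10 := hptw t B₀ ht htT hBt
        rw [← hw₁def] at h10
        have hee : Real.exp (-w₁) * Real.exp w₁ = 1 := by
          rw [← Real.exp_add]; simp
        have hAt : A t ≤ A₀ := by
          rw [hA₀def]
          calc A t = (Real.exp (-w₁) * Real.exp w₁) * A t := by rw [hee]; ring
            _ = Real.exp (-w₁) * (Real.exp w₁ * A t) := by ring
            _ ≤ Real.exp (-w₁) * B₀ :=
              mul_le_mul_of_nonneg_left (le_trans h10 hBt) (le_of_lt (Real.exp_pos _))
            _ = B₀ * Real.exp (-w₁) := by ring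
        have hut := hu t ht
        have habs := (absmul τ₁ t T ht htT).1
        have hm := le_max_left (lε - lp1 + M₁ + a*A₀ + c*B₀) (C₄ + a*A₁ + c*B₁)
        have h11 : a*A t ≤ a*A₀ := mul_le_mul_of_nonneg_left hAt (le_of_lt ha)
        have h12 : c*B t ≤ c*B₀ := mul_le_mul_of_nonneg_left hBt (le_of_lt hc)
        have hfin : lε < Real.log ((X r t).1) := by linarith
        exact (Real.log_lt_log_iff hε (hfpos t ht)).1 (by rw [← hlεdef]; exact hfin)
  -- CASE III : c = b, a < d
  · have hda : (0:ℝ) < d - a := sub_pos.2 had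
    obtain ⟨A₀, hA₀def⟩ : ∃ x : ℝ, x = max 0 ((lp2 - lp1 + M₀)/(d-a)) := ⟨_, rfl⟩
    have hA₀0 : (0:ℝ) ≤ A₀ := by rw [hA₀def]; exact le_max_left _ _
    have hA₀' : lp2 - lp1 + M₀ ≤ (d-a)*A₀ := by
      rw [hA₀def]
      have h := le_max_right (0:ℝ) ((lp2 - lp1 + M₀)/(d-a))
      have := (div_le_iff₀ hda).1 h
      linarith
    obtain ⟨kap, hkapdef⟩ : ∃ x : ℝ, x = Real.exp (lp2 - lp1 + M₀) := ⟨_, rfl⟩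
    have hkap0 : (0:ℝ) < kap := by rw [hkapdef]; exact Real.exp_pos _
    obtain ⟨A₁, hA₁def⟩ : ∃ x : ℝ, x = max 0 ((C₂ + C₄)/(d-a)) := ⟨_, rfl⟩
    have hA₁0 : (0:ℝ) ≤ A₁ := by rw [hA₁def]; exact le_max_left _ _
    have hA₁' : C₂ + C₄ ≤ (d-a)*A₁ := by
      rw [hA₁def]
      have h := le_max_right (0:ℝ) ((C₂ + C₄)/(d-a))
      have := (div_le_iff₀ hda).1 h
      linarith
    obtain ⟨LIII, hLIIIdef⟩ : ∃ x : ℝ,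
        x = max (lε - lp1 + M₁ + a*A₀ + c*(kap*A₀)) (C₄ + a*A₁ + c*(kap*A₁)) + 1 := ⟨_, rfl⟩
    refine ⟨max 1 (Real.exp LIII), lt_of_lt_of_le one_pos (le_max_left _ _), ?_⟩
    intro r hr
    have hr0 : 0 < r := lt_of_lt_of_le one_pos (le_trans (le_max_left _ _) hr)
    have hLr : LIII ≤ Real.log r :=
      (Real.le_log_iff_exp_le hr0).2 (le_trans (le_max_right _ _) hr)
    obtain ⟨A, B, hfpos, hgpos, hu, hv, hA0, hB0, hBmono, hcompBA, hcompAB, hcrash⟩ :=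
      hbasic r hr0
    have hcrashK : (X r T).1 ≤ K := by rw [hKdef]; exact hcrash
    have h2 : ∀ t, 0 ≤ t → t ≤ T → ε < (X r t).2 → b*B t + d*A t < (Real.log r) + C₂ := by
      intro t ht htT hgt
      have hvt := hv t ht
      have hlog : lε < Real.log ((X r t).2) := by rw [hlεdef]; exact Real.log_lt_log hε hgt
      have habs := (absmul τ₂ t T ht htT).2
      linarith
    have hW : ∀ t, 0 ≤ t → Real.log ((X r t).2)
        = Real.log ((X r t).1) + (lp2 - lp1) + (τ₂-τ₁)*t - (d-a)*A t := by
      intro t ht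
      have h1 := hu t ht
      have h2' := hv t ht
      rw [← hcb] at h2'
      linarith
    have hptw : ∀ t, 0 ≤ t → t ≤ T → B t ≤ kap * A t := by
      intro t ht htT
      apply hcompAB t kap ht (le_of_lt hkap0)
      intro s hs hst
      have hsT : s ≤ T := le_trans hst htT
      have hWs := hW s hs
      have habs := (absmul (τ₂-τ₁) s T hs hsT).2
      have hAs : 0 ≤ (d-a)*A s := mul_nonneg (le_of_lt hda) (hA0 s hs)
      have hlog : Real.log ((X r s).2) ≤ Real.log (kap * (X r s).1) := by
        rw [hkapdef, Real.log_mul (ne_of_gt (Real.exp_pos _)) (ne_of_gt (hfpos s hs)),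
          Real.log_exp]
        linarith
      exact (Real.log_le_log_iff (hgpos s hs) (mul_pos hkap0 (hfpos s hs))).1 hlog
    constructor
    · by_contra hcon
      push_neg at hcon
      have hgT := hcon T (le_of_lt hT) le_rfl
      have h2T := h2 T (le_of_lt hT) le_rfl hgT
      have huT := hu T (le_of_lt hT)
      have hlogK : Real.log ((X r T).1) ≤ Real.log K :=
        (Real.log_le_log_iff (hfpos T (le_of_lt hT)) hK0).2 hcrashK
      have habs := (absmul τ₁ T T (le_of_lt hT) le_rfl).1
      have h5 : (Real.log r) - C₄ ≤ a*A T + c*B T := by linarith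
      have h8 : (d-a)*A T < C₂ + C₄ := by
        rw [← hcb] at h2T
        nlinarith
      have hAT : A T ≤ A₁ := by
        have h9 : (d-a)*A T ≤ (d-a)*A₁ := le_trans (le_of_lt h8) hA₁'
        exact le_of_mul_le_mul_left h9 hda
      have hBT : B T ≤ kap*A₁ := by
        have := hptw T (le_of_lt hT) le_rfl
        have h13 : kap*A T ≤ kap*A₁ := mul_le_mul_of_nonneg_left hAT (le_of_lt hkap0)
        linarith
      have h11 : a*A T ≤ a*A₁ := mul_le_mul_of_nonneg_left hAT (le_of_lt ha)
      have h12 : c*B T ≤ c*(kap*A₁) := mul_le_mul_of_nonneg_left hBT (le_of_lt hc)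
      have hm := le_max_right (lε - lp1 + M₁ + a*A₀ + c*(kap*A₀)) (C₄ + a*A₁ + c*(kap*A₁))
      linarith
    · intro t ht htT hyp
      have hgt := hyp t ht le_rfl
      have hlogg : lε < Real.log ((X r t).2) := by rw [hlεdef]; exact Real.log_lt_log hε hgt
      have hWt := hW t ht
      by_cases hcase2 : lp2 - lp1 + M₀ ≤ (d-a)*A t
      · have habs := (absmul (τ₂-τ₁) t T ht htT).2
        have hfin : lε < Real.log ((X r t).1) := by linarith
        exact (Real.log_lt_log_iff hε (hfpos t ht)).1 (by rw [← hlεdef]; exact hfin)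
      · push_neg at hcase2
        have hAt : A t ≤ A₀ := by
          have h9 : (d-a)*A t ≤ (d-a)*A₀ := le_trans (le_of_lt hcase2) hA₀'
          exact le_of_mul_le_mul_left h9 hda
        have hBt : B t ≤ kap*A₀ := by
          have := hptw t ht htT
          have h13 : kap*A t ≤ kap*A₀ := mul_le_mul_of_nonneg_left hAt (le_of_lt hkap0)
          linarith
        have hut := hu t ht
        have habs := (absmul τ₁ t T ht htT).1
        have hm := le_max_left (lε - lp1 + M₁ + a*A₀ + c*(kap*A₀)) (C₄ + a*A₁ + c*(kap*A₁))
        have h11 : a*A t ≤ a*A₀ := mul_le_mul_of_nonneg_left hAt (le_of_lt ha)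
        have h12 : c*B t ≤ c*(kap*A₀) := mul_le_mul_of_nonneg_left hBt (le_of_lt hc)
        have hfin : lε < Real.log ((X r t).1) := by linarith
        exact (Real.log_lt_log_iff hε (hfpos t ht)).1 (by rw [← hlεdef]; exact hfin)

/-- When `(b > c and a ≤ d)` or `(b ≥ c and a < d)`, for large `r` the flow
started from `r·x₀` exits `𝒟_ε` before time `T`, through its lower boundary. -/
theorem stmt9 (τ₁ τ₂ a b c d : ℝ) (ha : 0 < a) (hb : 0 < b) (hc : 0 < c) (hd : 0 < d)
    (hcase : (c < b ∧ a ≤ d) ∨ (c ≤ b ∧ a < d))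
    (x₀ : ℝ × ℝ) (hx₀ : 0 < x₀.1 ∧ 0 < x₀.2)
    (X : ℝ → ℝ → ℝ × ℝ)
    (hX0 : ∀ r : ℝ, 0 < r → X r 0 = (r * x₀.1, r * x₀.2))
    (hXmem : ∀ r : ℝ, 0 < r → ∀ t : ℝ, 0 ≤ t → 0 ≤ (X r t).1 ∧ 0 ≤ (X r t).2)
    (hXder : ∀ r : ℝ, 0 < r → ∀ t : ℝ, 0 ≤ t →
      HasDerivAt (X r) (bLV τ₁ τ₂ a b c d (X r t)) t)
    (ε T : ℝ) (hε : 0 < ε) (hT : 0 < T) :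
    ∃ r₀ : ℝ, ∀ r : ℝ, r₀ ≤ r →
      exitT X ε r ≤ ENNReal.ofReal T ∧
      exitT X ε r = sInf (ENNReal.ofReal '' {t : ℝ | 0 ≤ t ∧ (X r t).2 ≤ ε}) := by
  obtain ⟨r₀, hr₀pos, hkey⟩ :=
    key τ₁ τ₂ a b c d ha hb hc hd hcase x₀ hx₀ X hX0 hXmem hXder ε T hε hT
  refine ⟨r₀, fun r hr => ?_⟩
  obtain ⟨⟨t₀, ht₀0, ht₀T, ht₀g⟩, hB⟩ := hkey r hr
  have hmem₀ : ENNReal.ofReal t₀ ∈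
      ENNReal.ofReal '' {t : ℝ | 0 ≤ t ∧ ¬(ε < (X r t).1 ∧ ε < (X r t).2)} :=
    Set.mem_image_of_mem _ ⟨ht₀0, fun h => absurd h.2 (not_lt.2 ht₀g)⟩
  constructor
  · exact le_trans (sInf_le hmem₀) (ENNReal.ofReal_le_ofReal ht₀T)
  · apply le_antisymm
    · apply sInf_le_sInf
      apply Set.image_mono
      intro t ht
      exact ⟨ht.1, fun h => absurd h.2 (not_lt.2 ht.2)⟩
    · apply le_sInf
      rintro y ⟨t, ⟨ht0, hnot⟩, rfl⟩
      by_cases hgle : (X r t).2 ≤ ε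
      · exact sInf_le (Set.mem_image_of_mem _ ⟨ht0, hgle⟩)
      · push_neg at hgle
        have hex : ∃ s, 0 ≤ s ∧ s ≤ t ∧ (X r s).2 ≤ ε := by
          by_contra hno
          push_neg at hno
          rcases le_or_gt t T with htT | hTt
          · have hft := hB t ht0 htT hno
            have hfle : (X r t).1 ≤ ε := by
              by_contra hf
              push_neg at hf
              exact hnot ⟨hf, hgle⟩
            linarith
          · exact absurd ht₀g
              (not_le.2 (hno t₀ ht₀0 (le_trans ht₀T (le_of_lt hTt))))
        obtain ⟨s, hs0, hst, hgs⟩ := hex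
        exact le_trans (sInf_le (Set.mem_image_of_mem _ ⟨hs0, hgs⟩))
          (ENNReal.ofReal_le_ofReal hst)
end

section
/- Assume either (a > d > 0 and b > c > 0), or (a, b > 0 and c = d = 0), or (a = d > 0 and b = c > 0). For α > 0 let T_{𝔇_α}(x₀) = inf{ t ≥ 0 : φ(x₀,t) ∉ 𝔇_α } be the exit time of the flow from 𝔇_α. Then for every α₀ > 0, inf_{x₀ ∈ 𝔇_{α₀}} T_{𝔇_α}(x₀) → +∞ as α → 0+; i.e. for every M > 0 there exists α₁ ∈ (0,α₀) such that for all α ∈ (0,α₁] and all x₀ ∈ 𝔇_{α₀}, T_{𝔇_α}(x₀) ≥ M. -/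
open Real Set Filter ENNReal

/-- The cone-like domain `𝔇_α = { x ∈ (α,∞)² : x₁ ≥ α x₂, x₂ ≥ α x₁ }`. -/
def Dfrak (α : ℝ) : Set (ℝ × ℝ) :=
  {x | α < x.1 ∧ α < x.2 ∧ α * x.2 ≤ x.1 ∧ α * x.1 ≤ x.2}

/-- Exit time of the flow `t ↦ Φ x₀ t` from `𝔇_α`
(with values in `ℝ≥0∞`, `inf ∅ = ∞`). -/
noncomputable def exitD (Φ : ℝ × ℝ → ℝ → ℝ × ℝ) (α : ℝ) (x₀ : ℝ × ℝ) : ℝ≥0∞ :=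
  sInf (ENNReal.ofReal '' {t : ℝ | 0 ≤ t ∧ Φ x₀ t ∉ Dfrak α})

lemma barrier {f f' : ℝ → ℝ} {T : ℝ}
    (hd : ∀ t ∈ Set.Icc (0:ℝ) T, HasDerivAt f (f' t) t)
    (h0 : 0 < f 0)
    (hz : ∀ t ∈ Set.Icc (0:ℝ) T, f t = 0 → 0 < f' t) :
    ∀ t ∈ Set.Icc (0:ℝ) T, 0 < f t := by
  by_contra hcon
  push_neg at hcon
  obtain ⟨t₁, ht₁, hft₁⟩ := hcon
  set S : Set ℝ := {t | t ∈ Set.Icc (0:ℝ) t₁ ∧ f t ≤ 0} with hS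
  have hSne : S.Nonempty := ⟨t₁, ⟨⟨ht₁.1, le_rfl⟩, hft₁⟩⟩
  have hSbdd : BddBelow S := ⟨0, fun s hs => hs.1.1⟩
  set t₀ := sInf S with ht₀def
  have ht₀mem : t₀ ∈ Set.Icc (0:ℝ) t₁ :=
    ⟨le_csInf hSne fun s hs => hs.1.1, csInf_le hSbdd ⟨⟨ht₁.1, le_rfl⟩, hft₁⟩⟩
  have ht₀T : t₀ ∈ Set.Icc (0:ℝ) T := ⟨ht₀mem.1, ht₀mem.2.trans ht₁.2⟩
  have hcont : ContinuousAt f t₀ := (hd t₀ ht₀T).continuousAt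
  have hft₀le : f t₀ ≤ 0 := by
    by_contra h
    push_neg at h
    have hev : ∀ᶠ s in nhds t₀, 0 < f s := hcont.eventually (eventually_gt_nhds h)
    obtain ⟨δ, hδ, hball⟩ := Metric.eventually_nhds_iff.mp hev
    obtain ⟨s, hsS, hslt⟩ := Real.lt_sInf_add_pos hSne hδ
    have hges : t₀ ≤ s := csInf_le hSbdd hsS
    have : 0 < f s := by
      apply hball
      rw [Real.dist_eq, abs_lt]
      constructor <;> linarith
    exact absurd hsS.2 (not_le.mpr this)
  have ht₀pos : 0 < t₀ := by
    rcases lt_or_eq_of_le ht₀mem.1 with h | h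
    · exact h
    · exfalso; rw [← h] at hft₀le; linarith
  have hlt : ∀ s, 0 ≤ s → s < t₀ → 0 < f s := by
    intro s hs0 hst
    by_contra h
    push_neg at h
    have : s ∈ S := ⟨⟨hs0, hst.le.trans ht₀mem.2⟩, h⟩
    exact absurd (csInf_le hSbdd this) (not_le.mpr hst)
  have hft₀ : f t₀ = 0 := by
    refine le_antisymm hft₀le ?_
    have htend : Filter.Tendsto f (nhdsWithin t₀ (Set.Iio t₀)) (nhds (f t₀)) :=
      hcont.continuousWithinAt.tendsto
    refine ge_of_tendsto htend ?_
    filter_upwards [Ioo_mem_nhdsLT_of_mem (Set.mem_Ioc.mpr ⟨ht₀pos, le_rfl⟩)] with s hs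
    exact (hlt s hs.1.le hs.2).le
  have hpos := hz t₀ ht₀T hft₀
  have hslope := hasDerivAt_iff_tendsto_slope.mp (hd t₀ ht₀T)
  have hev : ∀ᶠ s in nhdsWithin t₀ (Set.Iio t₀), 0 < slope f t₀ s :=
    (hslope.mono_left (nhdsWithin_mono _ fun s hs => ne_of_lt hs)).eventually
      (eventually_gt_nhds hpos)
  have hev2 : ∀ᶠ s in nhdsWithin t₀ (Set.Iio t₀), s ∈ Set.Ioo 0 t₀ :=
    Ioo_mem_nhdsLT_of_mem (Set.mem_Ioc.mpr ⟨ht₀pos, le_rfl⟩)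
  obtain ⟨s, hs1, hs2⟩ := (hev.and hev2).exists
  have hsneg : f s < 0 := by
    rw [slope_def_field, hft₀] at hs1
    have hdiff : s - t₀ < 0 := by linarith [hs2.2]
    by_contra h
    push_neg at h
    have : (f s - 0) / (s - t₀) ≤ 0 :=
      div_nonpos_of_nonneg_of_nonpos (by linarith) hdiff.le
    linarith
  exact absurd (hlt s hs2.1.le hs2.2) (not_lt.mpr hsneg.le)

lemma hasDerivAt_cexp (ε C t : ℝ) :
    HasDerivAt (fun s : ℝ => ε * Real.exp (C * s)) (ε * C * Real.exp (C * t)) t := by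
  have h := (((hasDerivAt_id t).const_mul C).exp).const_mul ε
  simpa [mul_comm, mul_assoc, mul_left_comm] using h

set_option maxHeartbeats 1000000 in
/-- Under the parameter condition, the exit time from `𝔇_α` of the flow started
anywhere in `𝔇_{α₀}` tends to `+∞`, uniformly, as `α → 0+`. -/
theorem stmt10 (τ₁ τ₂ a b c d : ℝ)
    (hcase : (d < a ∧ 0 < d ∧ c < b ∧ 0 < c) ∨
             (0 < a ∧ 0 < b ∧ c = 0 ∧ d = 0) ∨
             (a = d ∧ 0 < d ∧ b = c ∧ 0 < c))
    (Φ : ℝ × ℝ → ℝ → ℝ × ℝ)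
    (hΦ0 : ∀ x₀ : ℝ × ℝ, 0 ≤ x₀.1 → 0 ≤ x₀.2 → Φ x₀ 0 = x₀)
    (hΦmem : ∀ x₀ : ℝ × ℝ, 0 ≤ x₀.1 → 0 ≤ x₀.2 → ∀ t : ℝ, 0 ≤ t →
      0 ≤ (Φ x₀ t).1 ∧ 0 ≤ (Φ x₀ t).2)
    (hΦder : ∀ x₀ : ℝ × ℝ, 0 ≤ x₀.1 → 0 ≤ x₀.2 → ∀ t : ℝ, 0 ≤ t →
      HasDerivAt (Φ x₀) (bLV τ₁ τ₂ a b c d (Φ x₀ t)) t) :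
    ∀ α₀ > 0, ∀ M > 0, ∃ α₁ ∈ Set.Ioo 0 α₀, ∀ α ∈ Set.Ioc (0 : ℝ) α₁,
      ∀ x₀ ∈ Dfrak α₀, ENNReal.ofReal M ≤ exitD Φ α x₀ := by
  obtain ⟨ha, hb, hc, hd', hAB⟩ :
      0 < a ∧ 0 < b ∧ 0 ≤ c ∧ 0 ≤ d ∧
        ((0 < a - d ∧ 0 < b - c) ∨ (a - d = 0 ∧ b - c = 0)) := by
    rcases hcase with ⟨h1, h2, h3, h4⟩ | ⟨h1, h2, h3, h4⟩ | ⟨h1, h2, h3, h4⟩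
    · exact ⟨by linarith, by linarith, by linarith, by linarith,
        Or.inl ⟨by linarith, by linarith⟩⟩
    · exact ⟨h1, h2, le_of_eq h3.symm, le_of_eq h4.symm,
        Or.inl ⟨by linarith, by linarith⟩⟩
    · exact ⟨by linarith, by linarith, by linarith, by linarith,
        Or.inr ⟨by linarith, by linarith⟩⟩
  have hA0 : 0 ≤ a - d := by
    rcases hAB with ⟨h, _⟩ | ⟨h, _⟩
    · exact h.le
    · exact le_of_eq h.symm
  have hB0 : 0 ≤ b - c := by
    rcases hAB with ⟨_, h⟩ | ⟨_, h⟩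
    · exact h.le
    · exact le_of_eq h.symm
  intro α₀ hα₀ M hM
  obtain ⟨ρ₀, σ₀, hρ₀, hσ₀, hρle, hσle, hρAB, hσAB⟩ :
      ∃ ρ₀ σ₀ : ℝ, 0 < ρ₀ ∧ 0 < σ₀ ∧ 2 * ρ₀ ≤ α₀ ∧ 2 * σ₀ ≤ α₀ ∧
        (a - d) * ρ₀ ≤ b - c ∧ (b - c) * σ₀ ≤ a - d := by
    rcases hAB with ⟨hA, hB⟩ | ⟨hA, hB⟩
    · refine ⟨min α₀ ((b - c) / (a - d)) / 2, min α₀ ((a - d) / (b - c)) / 2,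
        by positivity, by positivity,
        by linarith [min_le_left α₀ ((b - c) / (a - d))],
        by linarith [min_le_left α₀ ((a - d) / (b - c))], ?_, ?_⟩
      · have h1 : (a - d) * (min α₀ ((b - c) / (a - d)) / 2) ≤
            (a - d) * ((b - c) / (a - d) / 2) :=
          mul_le_mul_of_nonneg_left
            (by linarith [min_le_right α₀ ((b - c) / (a - d))]) hA.le
        have h2 : (a - d) * ((b - c) / (a - d) / 2) = (b - c) / 2 := by
          field_simp
        linarith
      · have h1 : (b - c) * (min α₀ ((a - d) / (b - c)) / 2) ≤
            (b - c) * ((a - d) / (b - c) / 2) :=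
          mul_le_mul_of_nonneg_left
            (by linarith [min_le_right α₀ ((a - d) / (b - c))]) hB.le
        have h2 : (b - c) * ((a - d) / (b - c) / 2) = (a - d) / 2 := by
          field_simp
        linarith
    · exact ⟨α₀ / 2, α₀ / 2, by positivity, by positivity, by linarith, by linarith,
        by rw [hA, hB]; simp, by rw [hA, hB]; simp⟩
  set L : ℝ := |τ₁ - τ₂| + 1 with hLdef
  have hLpos : 0 < L := by positivity
  have hL1 : 1 ≤ τ₁ - τ₂ + L := by
    have := neg_abs_le (τ₁ - τ₂); simp only [hLdef]; linarith
  have hL2 : 1 ≤ τ₂ - τ₁ + L := by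
    have := le_abs_self (τ₁ - τ₂); simp only [hLdef]; linarith
  set ρm : ℝ := ρ₀ * Real.exp (-L * M) with hρmdef
  set σm : ℝ := σ₀ * Real.exp (-L * M) with hσmdef
  have hρm : 0 < ρm := by positivity
  have hσm : 0 < σm := by positivity
  set r : ℝ := min ρm σm with hrdef
  have hr : 0 < r := lt_min hρm hσm
  set C : ℝ := |τ₁| + |τ₂| + a + b + (c + d) / r + 1 with hCdef
  have hC : 0 < C := by
    have h1 : 0 ≤ (c + d) / r := div_nonneg (by linarith) hr.le
    have := abs_nonneg τ₁; have := abs_nonneg τ₂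
    simp only [hCdef]; linarith
  set ε : ℝ := min α₀ 1 / 2 with hεdef
  have hε : 0 < ε := by positivity
  have hε1 : ε ≤ 1 / 2 := by
    simp only [hεdef]; have := min_le_right α₀ 1; linarith
  have hεα : 2 * ε ≤ α₀ := by
    simp only [hεdef]; have := min_le_left α₀ 1; linarith
  set m : ℝ := ε * Real.exp (-C * M) with hmdef
  have hm : 0 < m := by positivity
  set α₁ : ℝ := min (min r m) α₀ / 2 with hα₁def
  have hα₁pos : 0 < α₁ := by positivity
  have hα₁r : 2 * α₁ ≤ r := by
    simp only [hα₁def]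
    have := min_le_left (min r m) α₀; have := min_le_left r m; linarith
  have hα₁m : 2 * α₁ ≤ m := by
    simp only [hα₁def]
    have := min_le_left (min r m) α₀; have := min_le_right r m; linarith
  have hα₁α₀ : α₁ < α₀ := by
    simp only [hα₁def]
    have := min_le_right (min r m) α₀; linarith
  clear_value L ρm σm r C ε m α₁
  refine ⟨α₁, ⟨hα₁pos, hα₁α₀⟩, ?_⟩
  rintro α ⟨hαpos, hαle⟩ x₀ hx₀
  obtain ⟨p, q⟩ := x₀
  obtain ⟨hp, hq, hpq, hqp⟩ : α₀ < p ∧ α₀ < q ∧ α₀ * q ≤ p ∧ α₀ * p ≤ q := hx₀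
  have hp0 : 0 ≤ p := by linarith
  have hq0 : 0 ≤ q := by linarith
  set x : ℝ → ℝ := fun t => (Φ (p, q) t).1 with hxdef
  set y : ℝ → ℝ := fun t => (Φ (p, q) t).2 with hydef
  have hx0 : x 0 = p := by simp only [hxdef, hΦ0 (p, q) hp0 hq0]
  have hy0 : y 0 = q := by simp only [hydef, hΦ0 (p, q) hp0 hq0]
  have hxnn : ∀ t ∈ Set.Icc (0:ℝ) M, 0 ≤ x t :=
    fun t ht => (hΦmem (p, q) hp0 hq0 t ht.1).1
  have hynn : ∀ t ∈ Set.Icc (0:ℝ) M, 0 ≤ y t :=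
    fun t ht => (hΦmem (p, q) hp0 hq0 t ht.1).2
  have hdx : ∀ t ∈ Set.Icc (0:ℝ) M,
      HasDerivAt x (x t * (τ₁ - a * x t - c * y t)) t := by
    intro t ht
    have h := hΦder (p, q) hp0 hq0 t ht.1
    have h2 := hasFDerivAt_fst.comp_hasDerivAt t h.hasFDerivAt.hasDerivAt
    simp [bLV] at h2
    exact h2
  have hdy : ∀ t ∈ Set.Icc (0:ℝ) M,
      HasDerivAt y (y t * (τ₂ - b * y t - d * x t)) t := by
    intro t ht
    have h := hΦder (p, q) hp0 hq0 t ht.1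
    have h2 := hasFDerivAt_snd.comp_hasDerivAt t h.hasFDerivAt.hasDerivAt
    simp [bLV] at h2
    exact h2
  clear_value x y
  -- Step 1: per-initial-condition upper bounds
  set X : ℝ := max p q + 1 with hXdef
  have hX : 0 < X := by
    have := le_max_left p q; simp only [hXdef]; linarith
  set Lu : ℝ := |τ₁| + |τ₂| + 1 with hLudef
  have hLu : 0 < Lu := by positivity
  have hLuτ₁ : 1 ≤ Lu - τ₁ := by
    have := le_abs_self τ₁; have := abs_nonneg τ₂; simp only [hLudef]; linarith
  have hLuτ₂ : 1 ≤ Lu - τ₂ := by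
    have := le_abs_self τ₂; have := abs_nonneg τ₁; simp only [hLudef]; linarith
  clear_value X Lu
  have hUx : ∀ t ∈ Set.Icc (0:ℝ) M, 0 < X * Real.exp (Lu * t) - x t := by
    refine barrier (f' := fun t => X * Lu * Real.exp (Lu * t) -
      x t * (τ₁ - a * x t - c * y t))
      (fun t ht => (hasDerivAt_cexp X Lu t).sub (hdx t ht)) ?_ ?_
    · rw [hx0]; simp only [mul_zero, Real.exp_zero, mul_one]
      have := le_max_left p q; simp only [hXdef]; linarith
    · intro t ht hft
      beta_reduce
      have hxe : x t = X * Real.exp (Lu * t) := by linarith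
      have hE : 0 < X * Real.exp (Lu * t) := mul_pos hX (Real.exp_pos _)
      have hxpos : 0 < x t := hxe ▸ hE
      have h1 : X * Lu * Real.exp (Lu * t) = Lu * x t := by rw [hxe]; ring
      have h2 : x t * 1 ≤ x t * (Lu - τ₁) :=
        mul_le_mul_of_nonneg_left hLuτ₁ hxpos.le
      have h3 : 0 ≤ a * (x t * x t) :=
        mul_nonneg ha.le (mul_nonneg hxpos.le hxpos.le)
      have h4 : 0 ≤ c * (x t * y t) :=
        mul_nonneg hc (mul_nonneg hxpos.le (hynn t ht))
      linarith [h1, h2, h3, h4, hxpos]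
  have hUy : ∀ t ∈ Set.Icc (0:ℝ) M, 0 < X * Real.exp (Lu * t) - y t := by
    refine barrier (f' := fun t => X * Lu * Real.exp (Lu * t) -
      y t * (τ₂ - b * y t - d * x t))
      (fun t ht => (hasDerivAt_cexp X Lu t).sub (hdy t ht)) ?_ ?_
    · rw [hy0]; simp only [mul_zero, Real.exp_zero, mul_one]
      have := le_max_right p q; simp only [hXdef]; linarith
    · intro t ht hft
      beta_reduce
      have hye : y t = X * Real.exp (Lu * t) := by linarith
      have hE : 0 < X * Real.exp (Lu * t) := mul_pos hX (Real.exp_pos _)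
      have hypos : 0 < y t := hye ▸ hE
      have h1 : X * Lu * Real.exp (Lu * t) = Lu * y t := by rw [hye]; ring
      have h2 : y t * 1 ≤ y t * (Lu - τ₂) :=
        mul_le_mul_of_nonneg_left hLuτ₂ hypos.le
      have h3 : 0 ≤ b * (y t * y t) :=
        mul_nonneg hb.le (mul_nonneg hypos.le hypos.le)
      have h4 : 0 ≤ d * (y t * x t) :=
        mul_nonneg hd' (mul_nonneg hypos.le (hxnn t ht))
      linarith [h1, h2, h3, h4, hypos]
  -- coordinate upper bound on [0, M]
  set XE : ℝ := X * Real.exp (Lu * M) with hXEdef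
  have hXE : 0 < XE := mul_pos hX (Real.exp_pos _)
  clear_value XE
  have hxub : ∀ t ∈ Set.Icc (0:ℝ) M, x t ≤ XE := by
    intro t ht
    have h1 := hUx t ht
    have h2 : Real.exp (Lu * t) ≤ Real.exp (Lu * M) :=
      Real.exp_le_exp.mpr (mul_le_mul_of_nonneg_left ht.2 hLu.le)
    have h3 : X * Real.exp (Lu * t) ≤ X * Real.exp (Lu * M) :=
      mul_le_mul_of_nonneg_left h2 hX.le
    linarith [hXEdef.ge]
  have hyub : ∀ t ∈ Set.Icc (0:ℝ) M, y t ≤ XE := by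
    intro t ht
    have h1 := hUy t ht
    have h2 : Real.exp (Lu * t) ≤ Real.exp (Lu * M) :=
      Real.exp_le_exp.mpr (mul_le_mul_of_nonneg_left ht.2 hLu.le)
    have h3 : X * Real.exp (Lu * t) ≤ X * Real.exp (Lu * M) :=
      mul_le_mul_of_nonneg_left h2 hX.le
    linarith [hXEdef.ge]
  -- Step 2: positivity
  set K : ℝ := |τ₁| + |τ₂| + (a + b + c + d) * XE + 1 with hKdef
  have hKτ₁ : 1 ≤ τ₁ + K - a * XE - c * XE := by
    have h1 := neg_abs_le τ₁; have h2 := abs_nonneg τ₂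
    have h3 : 0 ≤ b * XE := mul_nonneg hb.le hXE.le
    have h4 : 0 ≤ d * XE := mul_nonneg hd' hXE.le
    simp only [hKdef]; linarith
  have hKτ₂ : 1 ≤ τ₂ + K - b * XE - d * XE := by
    have h1 := neg_abs_le τ₂; have h2 := abs_nonneg τ₁
    have h3 : 0 ≤ a * XE := mul_nonneg ha.le hXE.le
    have h4 : 0 ≤ c * XE := mul_nonneg hc hXE.le
    simp only [hKdef]; linarith
  clear_value K
  have hPx : ∀ t ∈ Set.Icc (0:ℝ) M, 0 < x t - p / 2 * Real.exp (-K * t) := by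
    refine barrier (f' := fun t => x t * (τ₁ - a * x t - c * y t) -
      p / 2 * -K * Real.exp (-K * t))
      (fun t ht => (hdx t ht).sub (hasDerivAt_cexp (p / 2) (-K) t)) ?_ ?_
    · rw [hx0]; simp only [mul_zero, Real.exp_zero, mul_one]; linarith
    · intro t ht hft
      beta_reduce
      have hxe : x t = p / 2 * Real.exp (-K * t) := by linarith
      have hxpos : 0 < x t := by
        rw [hxe]; exact mul_pos (by linarith) (Real.exp_pos _)
      have h1 : p / 2 * -K * Real.exp (-K * t) = -(K * x t) := by rw [hxe]; ring
      have h2 : a * x t ≤ a * XE := mul_le_mul_of_nonneg_left (hxub t ht) ha.le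
      have h3 : c * y t ≤ c * XE := mul_le_mul_of_nonneg_left (hyub t ht) hc
      have hbr : 1 ≤ τ₁ + K - a * x t - c * y t := by linarith
      have h4 : x t * 1 ≤ x t * (τ₁ + K - a * x t - c * y t) :=
        mul_le_mul_of_nonneg_left hbr hxpos.le
      linarith [h1, h4, hxpos]
  have hPy : ∀ t ∈ Set.Icc (0:ℝ) M, 0 < y t - q / 2 * Real.exp (-K * t) := by
    refine barrier (f' := fun t => y t * (τ₂ - b * y t - d * x t) -
      q / 2 * -K * Real.exp (-K * t))
      (fun t ht => (hdy t ht).sub (hasDerivAt_cexp (q / 2) (-K) t)) ?_ ?_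
    · rw [hy0]; simp only [mul_zero, Real.exp_zero, mul_one]; linarith
    · intro t ht hft
      beta_reduce
      have hye : y t = q / 2 * Real.exp (-K * t) := by linarith
      have hypos : 0 < y t := by
        rw [hye]; exact mul_pos (by linarith) (Real.exp_pos _)
      have h1 : q / 2 * -K * Real.exp (-K * t) = -(K * y t) := by rw [hye]; ring
      have h2 : b * y t ≤ b * XE := mul_le_mul_of_nonneg_left (hyub t ht) hb.le
      have h3 : d * x t ≤ d * XE := mul_le_mul_of_nonneg_left (hxub t ht) hd'
      have hbr : 1 ≤ τ₂ + K - b * y t - d * x t := by linarith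
      have h4 : y t * 1 ≤ y t * (τ₂ + K - b * y t - d * x t) :=
        mul_le_mul_of_nonneg_left hbr hypos.le
      linarith [h1, h4, hypos]
  have hxpos : ∀ t ∈ Set.Icc (0:ℝ) M, 0 < x t := by
    intro t ht
    have h := hPx t ht
    have : 0 < p / 2 * Real.exp (-K * t) := mul_pos (by linarith) (Real.exp_pos _)
    linarith
  have hypos : ∀ t ∈ Set.Icc (0:ℝ) M, 0 < y t := by
    intro t ht
    have h := hPy t ht
    have : 0 < q / 2 * Real.exp (-K * t) := mul_pos (by linarith) (Real.exp_pos _)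
    linarith
  -- Step 3: ratio bounds
  have hRxy : ∀ t ∈ Set.Icc (0:ℝ) M, 0 < x t - ρ₀ * Real.exp (-L * t) * y t := by
    refine barrier (f' := fun t => x t * (τ₁ - a * x t - c * y t) -
      (ρ₀ * -L * Real.exp (-L * t) * y t +
        ρ₀ * Real.exp (-L * t) * (y t * (τ₂ - b * y t - d * x t))))
      (fun t ht => (hdx t ht).sub ((hasDerivAt_cexp ρ₀ (-L) t).mul (hdy t ht))) ?_ ?_
    · rw [hx0, hy0]
      simp only [mul_zero, neg_zero, Real.exp_zero, mul_one]
      have h1 : 0 ≤ (α₀ - 2 * ρ₀) * q := mul_nonneg (by linarith) hq0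
      have h2 : 0 < α₀ * q := mul_pos hα₀ (by linarith)
      linarith [hpq, h1, h2]
    · intro t ht hft
      beta_reduce
      have hxe : x t = ρ₀ * Real.exp (-L * t) * y t := by linarith
      have hyp : 0 < y t := hypos t ht
      have hEp : 0 < ρ₀ * Real.exp (-L * t) := mul_pos hρ₀ (Real.exp_pos _)
      have hexp1 : Real.exp (-L * t) ≤ 1 := by
        rw [Real.exp_le_one_iff]
        have : 0 ≤ L * t := mul_nonneg hLpos.le ht.1
        linarith
      have hEle : ρ₀ * Real.exp (-L * t) ≤ ρ₀ := by
        have := mul_le_mul_of_nonneg_left hexp1 hρ₀.le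
        linarith
      have hA2 : (a - d) * (ρ₀ * Real.exp (-L * t)) ≤ b - c :=
        le_trans (mul_le_mul_of_nonneg_left hEle hA0) hρAB
      have key : x t * (τ₁ - a * x t - c * y t) -
          (ρ₀ * -L * Real.exp (-L * t) * y t +
            ρ₀ * Real.exp (-L * t) * (y t * (τ₂ - b * y t - d * x t))) =
          ρ₀ * Real.exp (-L * t) * y t *
            ((τ₁ - τ₂ + L) + y t * ((b - c) - (a - d) * (ρ₀ * Real.exp (-L * t)))) := by
        rw [hxe]; ring
      have hbr : 0 ≤ y t * ((b - c) - (a - d) * (ρ₀ * Real.exp (-L * t))) :=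
        mul_nonneg hyp.le (by linarith)
      have hfac : 0 < ρ₀ * Real.exp (-L * t) * y t := mul_pos hEp hyp
      rw [key]
      have h5 := mul_le_mul_of_nonneg_left
        (show (1:ℝ) ≤ (τ₁ - τ₂ + L) + y t * ((b - c) - (a - d) * (ρ₀ * Real.exp (-L * t)))
          from by linarith) hfac.le
      linarith
  have hRyx : ∀ t ∈ Set.Icc (0:ℝ) M, 0 < y t - σ₀ * Real.exp (-L * t) * x t := by
    refine barrier (f' := fun t => y t * (τ₂ - b * y t - d * x t) -
      (σ₀ * -L * Real.exp (-L * t) * x t +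
        σ₀ * Real.exp (-L * t) * (x t * (τ₁ - a * x t - c * y t))))
      (fun t ht => (hdy t ht).sub ((hasDerivAt_cexp σ₀ (-L) t).mul (hdx t ht))) ?_ ?_
    · rw [hx0, hy0]
      simp only [mul_zero, neg_zero, Real.exp_zero, mul_one]
      have h1 : 0 ≤ (α₀ - 2 * σ₀) * p := mul_nonneg (by linarith) hp0
      have h2 : 0 < α₀ * p := mul_pos hα₀ (by linarith)
      linarith [hqp, h1, h2]
    · intro t ht hft
      beta_reduce
      have hye : y t = σ₀ * Real.exp (-L * t) * x t := by linarith
      have hxp : 0 < x t := hxpos t ht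
      have hEp : 0 < σ₀ * Real.exp (-L * t) := mul_pos hσ₀ (Real.exp_pos _)
      have hexp1 : Real.exp (-L * t) ≤ 1 := by
        rw [Real.exp_le_one_iff]
        have : 0 ≤ L * t := mul_nonneg hLpos.le ht.1
        linarith
      have hEle : σ₀ * Real.exp (-L * t) ≤ σ₀ := by
        have := mul_le_mul_of_nonneg_left hexp1 hσ₀.le
        linarith
      have hB2 : (b - c) * (σ₀ * Real.exp (-L * t)) ≤ a - d :=
        le_trans (mul_le_mul_of_nonneg_left hEle hB0) hσAB
      have key : y t * (τ₂ - b * y t - d * x t) -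
          (σ₀ * -L * Real.exp (-L * t) * x t +
            σ₀ * Real.exp (-L * t) * (x t * (τ₁ - a * x t - c * y t))) =
          σ₀ * Real.exp (-L * t) * x t *
            ((τ₂ - τ₁ + L) + x t * ((a - d) - (b - c) * (σ₀ * Real.exp (-L * t)))) := by
        rw [hye]; ring
      have hbr : 0 ≤ x t * ((a - d) - (b - c) * (σ₀ * Real.exp (-L * t))) :=
        mul_nonneg hxp.le (by linarith)
      have hfac : 0 < σ₀ * Real.exp (-L * t) * x t := mul_pos hEp hxp
      rw [key]
      have h5 := mul_le_mul_of_nonneg_left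
        (show (1:ℝ) ≤ (τ₂ - τ₁ + L) + x t * ((a - d) - (b - c) * (σ₀ * Real.exp (-L * t)))
          from by linarith) hfac.le
      linarith
  -- uniform ratio bounds via r
  have hρworst : ∀ t ∈ Set.Icc (0:ℝ) M, r ≤ ρ₀ * Real.exp (-L * t) := by
    intro t ht
    have h1 : Real.exp (-L * M) ≤ Real.exp (-L * t) := by
      apply Real.exp_le_exp.mpr
      have := mul_le_mul_of_nonneg_left ht.2 hLpos.le
      linarith
    have h2 := mul_le_mul_of_nonneg_left h1 hρ₀.le
    have h3 : r ≤ ρm := hrdef.le.trans (min_le_left _ _)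
    linarith [hρmdef.le]
  have hσworst : ∀ t ∈ Set.Icc (0:ℝ) M, r ≤ σ₀ * Real.exp (-L * t) := by
    intro t ht
    have h1 : Real.exp (-L * M) ≤ Real.exp (-L * t) := by
      apply Real.exp_le_exp.mpr
      have := mul_le_mul_of_nonneg_left ht.2 hLpos.le
      linarith
    have h2 := mul_le_mul_of_nonneg_left h1 hσ₀.le
    have h3 : r ≤ σm := hrdef.le.trans (min_le_right _ _)
    linarith [hσmdef.le]
  have hyx : ∀ t ∈ Set.Icc (0:ℝ) M, r * y t ≤ x t := by
    intro t ht
    have h1 := hRxy t ht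
    have h2 := mul_le_mul_of_nonneg_right (hρworst t ht) (hynn t ht)
    linarith
  have hxy : ∀ t ∈ Set.Icc (0:ℝ) M, r * x t ≤ y t := by
    intro t ht
    have h1 := hRyx t ht
    have h2 := mul_le_mul_of_nonneg_right (hσworst t ht) (hxnn t ht)
    linarith
  -- Step 4: uniform lower bounds on coordinates
  have hLx : ∀ t ∈ Set.Icc (0:ℝ) M, 0 < x t - ε * Real.exp (-C * t) := by
    refine barrier (f' := fun t => x t * (τ₁ - a * x t - c * y t) -
      ε * -C * Real.exp (-C * t))
      (fun t ht => (hdx t ht).sub (hasDerivAt_cexp ε (-C) t)) ?_ ?_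
    · rw [hx0]; simp only [mul_zero, neg_zero, Real.exp_zero, mul_one]; linarith
    · intro t ht hft
      beta_reduce
      have hxe : x t = ε * Real.exp (-C * t) := by linarith
      have hxp : 0 < x t := by
        rw [hxe]; exact mul_pos hε (Real.exp_pos _)
      have hexp1 : Real.exp (-C * t) ≤ 1 := by
        rw [Real.exp_le_one_iff]
        have : 0 ≤ C * t := mul_nonneg hC.le ht.1
        linarith
      have hx1 : x t ≤ 1 := by
        have := mul_le_mul_of_nonneg_left hexp1 hε.le
        rw [hxe]; linarith
      have hyr : y t ≤ 1 / r := by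
        rw [le_div_iff₀ hr]
        have := hyx t ht
        linarith
      have h1 : ε * -C * Real.exp (-C * t) = -(C * x t) := by rw [hxe]; ring
      have h2 : a * x t ≤ a * 1 := mul_le_mul_of_nonneg_left hx1 ha.le
      have h3 : c * y t ≤ c * (1 / r) := mul_le_mul_of_nonneg_left hyr hc
      have h6 : 0 ≤ d * (1 / r) := mul_nonneg hd' (by positivity)
      have hbr : 1 ≤ τ₁ + C - a * x t - c * y t := by
        have hab := neg_abs_le τ₁
        have hab2 := abs_nonneg τ₂
        rw [hCdef]
        have : (c + d) / r = c * (1 / r) + d * (1 / r) := by ring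
        rw [this]
        linarith
      have h4 : x t * 1 ≤ x t * (τ₁ + C - a * x t - c * y t) :=
        mul_le_mul_of_nonneg_left hbr hxp.le
      linarith [h1, h4, hxp]
  have hLy : ∀ t ∈ Set.Icc (0:ℝ) M, 0 < y t - ε * Real.exp (-C * t) := by
    refine barrier (f' := fun t => y t * (τ₂ - b * y t - d * x t) -
      ε * -C * Real.exp (-C * t))
      (fun t ht => (hdy t ht).sub (hasDerivAt_cexp ε (-C) t)) ?_ ?_
    · rw [hy0]; simp only [mul_zero, neg_zero, Real.exp_zero, mul_one]; linarith
    · intro t ht hft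
      beta_reduce
      have hye : y t = ε * Real.exp (-C * t) := by linarith
      have hyp : 0 < y t := by
        rw [hye]; exact mul_pos hε (Real.exp_pos _)
      have hexp1 : Real.exp (-C * t) ≤ 1 := by
        rw [Real.exp_le_one_iff]
        have : 0 ≤ C * t := mul_nonneg hC.le ht.1
        linarith
      have hy1 : y t ≤ 1 := by
        have := mul_le_mul_of_nonneg_left hexp1 hε.le
        rw [hye]; linarith
      have hxr : x t ≤ 1 / r := by
        rw [le_div_iff₀ hr]
        have := hxy t ht
        linarith
      have h1 : ε * -C * Real.exp (-C * t) = -(C * y t) := by rw [hye]; ring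
      have h2 : b * y t ≤ b * 1 := mul_le_mul_of_nonneg_left hy1 hb.le
      have h3 : d * x t ≤ d * (1 / r) := mul_le_mul_of_nonneg_left hxr hd'
      have h6 : 0 ≤ c * (1 / r) := mul_nonneg hc (by positivity)
      have hbr : 1 ≤ τ₂ + C - b * y t - d * x t := by
        have hab := neg_abs_le τ₂
        have hab2 := abs_nonneg τ₁
        rw [hCdef]
        have : (c + d) / r = c * (1 / r) + d * (1 / r) := by ring
        rw [this]
        linarith
      have h4 : y t * 1 ≤ y t * (τ₂ + C - b * y t - d * x t) :=
        mul_le_mul_of_nonneg_left hbr hyp.le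
      linarith [h1, h4, hyp]
  -- Step 5: membership in Dfrak α for all times in [0, M]
  have hmem : ∀ t ∈ Set.Icc (0:ℝ) M, Φ (p, q) t ∈ Dfrak α := by
    intro t ht
    have hxteq : x t = (Φ (p, q) t).1 := by rw [hxdef]
    have hyteq : y t = (Φ (p, q) t).2 := by rw [hydef]
    have hexpC : Real.exp (-C * M) ≤ Real.exp (-C * t) := by
      apply Real.exp_le_exp.mpr
      have := mul_le_mul_of_nonneg_left ht.2 hC.le
      linarith
    have hx_lb : m ≤ ε * Real.exp (-C * t) := by
      rw [hmdef]
      exact mul_le_mul_of_nonneg_left hexpC hε.le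
    have hαm : α < m := by linarith
    have hαr : α ≤ r := by linarith
    refine ⟨?_, ?_, ?_, ?_⟩
    · rw [← hxteq]
      have := hLx t ht
      linarith
    · rw [← hyteq]
      have := hLy t ht
      linarith
    · rw [← hxteq, ← hyteq]
      have h1 := mul_le_mul_of_nonneg_right hαr (hynn t ht)
      have h2 := hyx t ht
      linarith
    · rw [← hxteq, ← hyteq]
      have h1 := mul_le_mul_of_nonneg_right hαr (hxnn t ht)
      have h2 := hxy t ht
      linarith
  -- Step 6: conclude on the exit time
  refine le_sInf ?_
  rintro e ⟨t, ⟨ht0, hnot⟩, rfl⟩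
  have hMt : M ≤ t := by
    by_contra h
    push_neg at h
    exact hnot (hmem t ⟨ht0, h.le⟩)
  exact ENNReal.ofReal_le_ofReal hMt
end

section
/- Let α > 0, β ∈ (0,1] and γ > 0. There exists C > 0 such that for every x ∈ 𝔇_α and every K ≥ 2/α: ‖ h^K_{β,γ}(x) − J_{F_{β,γ}}(x) b(x) − Δ^K_{β,γ}(x) ‖₂ ≤ (C/K) · ‖x‖₂^{β−1}. -/
open Real Set

/-- The jump compensator `h^K_{β,γ}` of the transformed scaled birth–death
process. -/
noncomputable def hKbd (lam₁ lam₂ mu₁ mu₂ a b c d β γ K : ℝ) (x : ℝ × ℝ) : ℝ × ℝ :=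
  (lam₁ * K * x.1 * ((x.1 + 1 / K) ^ β - x.1 ^ β)
      + K * x.1 * (mu₁ + a * x.1 + c * x.2) * ((x.1 - 1 / K) ^ β - x.1 ^ β),
   γ * lam₂ * K * x.2 * ((x.2 + 1 / K) ^ β - x.2 ^ β)
      + γ * K * x.2 * (mu₂ + b * x.2 + d * x.1) * ((x.2 - 1 / K) ^ β - x.2 ^ β))

/-- The limiting drift `J_{F_{β,γ}}(x) b(x)` (with `τᵢ = λᵢ − μᵢ`). -/
noncomputable def JFb (lam₁ lam₂ mu₁ mu₂ a b c d β γ : ℝ) (x : ℝ × ℝ) : ℝ × ℝ :=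
  (β * x.1 ^ (β - 1) * (x.1 * ((lam₁ - mu₁) - a * x.1 - c * x.2)),
   γ * (β * x.2 ^ (β - 1) * (x.2 * ((lam₂ - mu₂) - b * x.2 - d * x.1))))

/-- The second-order correction `Δ^K_{β,γ}`. -/
noncomputable def DeltaK (a b c d β γ K : ℝ) (x : ℝ × ℝ) : ℝ × ℝ :=
  (β * (β - 1) / (2 * K) * ((a * x.1 + c * x.2) * x.1 ^ (β - 1)),
   β * (β - 1) / (2 * K) * (γ * (b * x.2 + d * x.1) * x.2 ^ (β - 1)))

/-- Euclidean norm on `ℝ²`. -/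
noncomputable def nrm2 (u : ℝ × ℝ) : ℝ := Real.sqrt (u.1 ^ 2 + u.2 ^ 2)


/-- Mean value bound on `uIcc 0 h`. -/
lemma mvt_bound {f f' : ℝ → ℝ} {h C : ℝ}
    (hd : ∀ t ∈ Set.uIcc (0:ℝ) h, HasDerivAt f (f' t) t)
    (hC : ∀ t ∈ Set.uIcc (0:ℝ) h, |f' t| ≤ C) :
    |f h - f 0| ≤ C * |h| := by
  have := Convex.norm_image_sub_le_of_norm_hasDerivWithin_le
    (f := f) (f' := f') (s := Set.uIcc (0:ℝ) h) (C := C)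
    (fun t ht => (hd t ht).hasDerivWithinAt) (fun t ht => by
      simpa [Real.norm_eq_abs] using hC t ht)
    (convex_uIcc 0 h) (Set.left_mem_uIcc) (Set.right_mem_uIcc)
  simpa [Real.norm_eq_abs] using this

lemma mem_abs_le {h t : ℝ} (ht : t ∈ Set.uIcc (0:ℝ) h) : |t| ≤ |h| := by
  rw [Set.uIcc_eq_union] at ht
  rcases ht with ht | ht <;> rw [abs_le] <;> rcases ht with ⟨h1, h2⟩ <;>
    constructor <;> cases le_or_gt 0 h <;> cases abs_cases h <;> linarith

/-- Third-order Taylor bound for `t ↦ (x+t)^β`. -/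
lemma taylor3 {β x : ℝ} (hβ0 : 0 < β) (hβ1 : β ≤ 1) (hx : 0 < x) {h : ℝ}
    (hh : |h| ≤ x / 2) :
    |(x + h) ^ β - x ^ β - β * x ^ (β - 1) * h - β * (β - 1) / 2 * x ^ (β - 2) * h ^ 2|
      ≤ 16 * x ^ (β - 3) * |h| ^ 3 := by
  have hpos : ∀ t ∈ Set.uIcc (0:ℝ) h, 0 < x + t := by
    intro t ht
    have := mem_abs_le ht
    have := abs_le.mp (this.trans hh)
    linarith
  have hhalf : ∀ t ∈ Set.uIcc (0:ℝ) h, x / 2 ≤ x + t := by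
    intro t ht
    have := abs_le.mp ((mem_abs_le ht).trans hh)
    linarith
  -- bound on (x+t)^(β-3)
  have hD : ∀ t ∈ Set.uIcc (0:ℝ) h, (x + t) ^ (β - 3) ≤ 8 * x ^ (β - 3) := by
    intro t ht
    have h1 : (x + t) ^ (β - 3) ≤ (x / 2) ^ (β - 3) :=
      Real.rpow_le_rpow_of_nonpos (by positivity) (hhalf t ht) (by linarith)
    have h2 : (x / 2 : ℝ) ^ (β - 3) = x ^ (β - 3) * 2 ^ (3 - β) := by
      rw [Real.div_rpow hx.le (by norm_num), show (3:ℝ) - β = -(β - 3) by ring,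
        Real.rpow_neg (by norm_num), div_eq_mul_inv]
    have h3 : (2:ℝ) ^ (3 - β) ≤ 8 := by
      have : (2:ℝ) ^ (3 - β) ≤ 2 ^ (3:ℝ) :=
        Real.rpow_le_rpow_of_exponent_le (by norm_num) (by linarith)
      have h8 : (2:ℝ) ^ (3:ℝ) = 8 := by
        rw [show (3:ℝ) = ((3:ℕ):ℝ) by norm_num, Real.rpow_natCast]; norm_num
      linarith
    calc (x + t) ^ (β - 3) ≤ x ^ (β - 3) * 2 ^ (3 - β) := by rw [← h2]; exact h1
      _ ≤ 8 * x ^ (β - 3) := by nlinarith [Real.rpow_nonneg hx.le (β - 3)]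
  -- derivative of (x+·)^p
  have hderiv : ∀ (p t : ℝ), 0 < x + t →
      HasDerivAt (fun s => (x + s) ^ p) (p * (x + t) ^ (p - 1)) t := by
    intro p t ht
    have h1 : HasDerivAt (fun s : ℝ => x + s) 1 t := (hasDerivAt_id t).const_add x
    have h2 := (Real.hasDerivAt_rpow_const (x := x + t) (p := p) (Or.inl ht.ne')).comp t h1
    exact h2.congr_deriv (mul_one _)
  -- step 1 : bound on (x+t)^(β-2) - x^(β-2)
  have hg : ∀ t ∈ Set.uIcc (0:ℝ) h, |(x + t) ^ (β - 2) - x ^ (β - 2)| ≤ 16 * x ^ (β - 3) * |t| := by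
    intro t ht
    have hsub : Set.uIcc (0:ℝ) t ⊆ Set.uIcc 0 h := Set.uIcc_subset_uIcc Set.left_mem_uIcc ht
    have hb : ∀ s ∈ Set.uIcc (0:ℝ) t, |(β - 2) * (x + s) ^ (β - 3)| ≤ 16 * x ^ (β - 3) := by
      intro s hs
      have h8 := hD s (hsub hs)
      have hp := Real.rpow_nonneg (hpos s (hsub hs)).le (β - 3)
      have : |(β - 2) * (x + s) ^ (β - 3)| = (2 - β) * (x + s) ^ (β - 3) := by
        rw [abs_mul, abs_of_nonneg hp, abs_of_nonpos (by linarith)]; ring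
      rw [this]
      nlinarith
    have := mvt_bound (f := fun s => (x + s) ^ (β - 2))
      (f' := fun s => (β - 2) * (x + s) ^ (β - 3)) (h := t) (C := 16 * x ^ (β - 3))
      (fun s hs => by
        simpa [show β - 2 - 1 = β - 3 by ring] using hderiv (β - 2) s (hpos s (hsub hs))) hb
    simpa using this
  -- the remainder function and its derivatives
  set F : ℝ → ℝ := fun t => (x + t) ^ β - x ^ β - β * x ^ (β - 1) * t
      - β * (β - 1) / 2 * x ^ (β - 2) * t ^ 2 with hF
  set F' : ℝ → ℝ := fun t => β * (x + t) ^ (β - 1) - β * x ^ (β - 1)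
      - β * (β - 1) * x ^ (β - 2) * t with hF'
  have hdF : ∀ t ∈ Set.uIcc (0:ℝ) h, HasDerivAt F (F' t) t := by
    intro t ht
    have h1 := hderiv β t (hpos t ht)
    have h3 : HasDerivAt (fun t : ℝ => β * x ^ (β - 1) * t) (β * x ^ (β - 1)) t := by
      simpa using (hasDerivAt_id t).const_mul (β * x ^ (β - 1))
    have h4 : HasDerivAt (fun t : ℝ => β * (β - 1) / 2 * x ^ (β - 2) * t ^ 2)
        (β * (β - 1) / 2 * x ^ (β - 2) * (2 * t)) t := by
      simpa using (hasDerivAt_pow 2 t).const_mul (β * (β - 1) / 2 * x ^ (β - 2))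
    have := ((h1.sub_const (x ^ β)).sub h3).sub h4
    refine this.congr_deriv ?_
    simp only [hF']; ring
  have hdF' : ∀ t ∈ Set.uIcc (0:ℝ) h,
      HasDerivAt F' (β * (β - 1) * ((x + t) ^ (β - 2) - x ^ (β - 2))) t := by
    intro t ht
    have h1 : HasDerivAt (fun s => β * (x + s) ^ (β - 1)) (β * ((β - 1) * (x + t) ^ (β - 1 - 1))) t :=
      (hderiv (β - 1) t (hpos t ht)).const_mul β
    have h3 : HasDerivAt (fun t : ℝ => β * (β - 1) * x ^ (β - 2) * t)
        (β * (β - 1) * x ^ (β - 2)) t := by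
      simpa using (hasDerivAt_id t).const_mul (β * (β - 1) * x ^ (β - 2))
    have := (h1.sub_const (β * x ^ (β - 1))).sub h3
    refine this.congr_deriv ?_
    rw [show β - 1 - 1 = β - 2 by ring]; ring
  -- bound on F'
  have hbF' : ∀ t ∈ Set.uIcc (0:ℝ) h, |F' t| ≤ 16 * x ^ (β - 3) * |h| * |t| := by
    intro t ht
    have hsub : Set.uIcc (0:ℝ) t ⊆ Set.uIcc 0 h := Set.uIcc_subset_uIcc Set.left_mem_uIcc ht
    have hb : ∀ s ∈ Set.uIcc (0:ℝ) t,
        |β * (β - 1) * ((x + s) ^ (β - 2) - x ^ (β - 2))| ≤ 16 * x ^ (β - 3) * |h| := by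
      intro s hs
      have h1 := hg s (hsub hs)
      have h2 : |s| ≤ |h| := mem_abs_le (hsub hs)
      have h3 : |β * (β - 1)| ≤ 1 := by
        rw [abs_mul, abs_of_pos hβ0, abs_of_nonpos (by linarith)]
        nlinarith
      have hp : (0:ℝ) ≤ 16 * x ^ (β - 3) := by positivity
      calc |β * (β - 1) * ((x + s) ^ (β - 2) - x ^ (β - 2))|
          = |β * (β - 1)| * |(x + s) ^ (β - 2) - x ^ (β - 2)| := abs_mul _ _
        _ ≤ 1 * (16 * x ^ (β - 3) * |h|) := by
            apply mul_le_mul h3 (h1.trans (by nlinarith)) (abs_nonneg _) zero_le_one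
        _ = 16 * x ^ (β - 3) * |h| := one_mul _
    have := mvt_bound (f := F') (f' := fun s => β * (β - 1) * ((x + s) ^ (β - 2) - x ^ (β - 2)))
      (h := t) (C := 16 * x ^ (β - 3) * |h|) (fun s hs => hdF' s (hsub hs)) hb
    have hF'0 : F' 0 = 0 := by simp [hF']
    rw [hF'0, sub_zero] at this
    exact this
  -- final bound
  have hfin := mvt_bound (f := F) (f' := F') (h := h) (C := 16 * x ^ (β - 3) * |h| * |h|)
    hdF (fun t ht => (hbF' t ht).trans (by
      have := mem_abs_le ht
      have hp : (0:ℝ) ≤ 16 * x ^ (β - 3) * |h| := by positivity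
      nlinarith))
  have hF0 : F 0 = 0 := by simp [hF]
  rw [hF0, sub_zero] at hfin
  calc |F h| ≤ 16 * x ^ (β - 3) * |h| * |h| * |h| := hfin
    _ = 16 * x ^ (β - 3) * |h| ^ 3 := by ring

/-- The one–dimensional compensator expansion bound. -/
lemma keybound {β : ℝ} (hβ0 : 0 < β) (hβ1 : β ≤ 1) {x K p q : ℝ} (hx : 0 < x)
    (hK : 0 < K) (hKx : 1 / K ≤ x / 2) (hp : 0 ≤ p) (hq : 0 ≤ q) :
    |p * K * x * ((x + 1 / K) ^ β - x ^ β) + q * K * x * ((x - 1 / K) ^ β - x ^ β)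
        - β * x ^ β * (p - q) - β * (β - 1) / (2 * K) * ((p + q) * x ^ (β - 1))|
      ≤ 16 * (p + q) / K ^ 2 * x ^ (β - 2) := by
  have heK : (0:ℝ) < 1 / K := by positivity
  have hb1 : x ^ β = x ^ (β - 1) * x := by
    have := Real.rpow_add_one hx.ne' (β - 1)
    rwa [show β - 1 + 1 = β by ring] at this
  have hb2 : x ^ (β - 1) = x ^ (β - 2) * x := by
    have := Real.rpow_add_one hx.ne' (β - 2)
    rwa [show β - 2 + 1 = β - 1 by ring] at this
  have hb3 : x ^ (β - 2) = x ^ (β - 3) * x := by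
    have := Real.rpow_add_one hx.ne' (β - 3)
    rwa [show β - 3 + 1 = β - 2 by ring] at this
  have hplus : |(x + 1 / K) ^ β - x ^ β - β * x ^ (β - 1) * (1 / K)
      - β * (β - 1) / 2 * x ^ (β - 2) * (1 / K) ^ 2| ≤ 16 * x ^ (β - 3) * (1 / K) ^ 3 := by
    have h := taylor3 hβ0 hβ1 hx (h := 1 / K) (by rwa [abs_of_pos heK])
    rwa [abs_of_pos heK] at h
  have hminus : |(x - 1 / K) ^ β - x ^ β + β * x ^ (β - 1) * (1 / K)
      - β * (β - 1) / 2 * x ^ (β - 2) * (1 / K) ^ 2| ≤ 16 * x ^ (β - 3) * (1 / K) ^ 3 := by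
    have h := taylor3 hβ0 hβ1 hx (h := -(1 / K)) (by rwa [abs_neg, abs_of_pos heK])
    rw [abs_neg, abs_of_pos heK, show x + -(1 / K) = x - 1 / K by ring] at h
    have e1 : (x - 1 / K) ^ β - x ^ β + β * x ^ (β - 1) * (1 / K)
        - β * (β - 1) / 2 * x ^ (β - 2) * (1 / K) ^ 2
        = (x - 1 / K) ^ β - x ^ β - β * x ^ (β - 1) * (-(1 / K))
        - β * (β - 1) / 2 * x ^ (β - 2) * (-(1 / K)) ^ 2 := by ring
    rwa [e1]
  set r1 : Real := (x + 1 / K) ^ β - x ^ β - β * x ^ (β - 1) * (1 / K)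
      - β * (β - 1) / 2 * x ^ (β - 2) * (1 / K) ^ 2 with hr1
  set r2 : Real := (x - 1 / K) ^ β - x ^ β + β * x ^ (β - 1) * (1 / K)
      - β * (β - 1) / 2 * x ^ (β - 2) * (1 / K) ^ 2 with hr2
  have key : p * K * x * ((x + 1 / K) ^ β - x ^ β) + q * K * x * ((x - 1 / K) ^ β - x ^ β)
      - β * x ^ β * (p - q) - β * (β - 1) / (2 * K) * ((p + q) * x ^ (β - 1))
      = p * K * x * r1 + q * K * x * r2 := by
    rw [hr1, hr2, hb1, hb2]
    field_simp
    ring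
  rw [key]
  have htr : |p * K * x * r1 + q * K * x * r2|
      ≤ (p + q) * (K * x) * (16 * x ^ (β - 3) * (1 / K) ^ 3) := by
    calc |p * K * x * r1 + q * K * x * r2| ≤ |p * K * x * r1| + |q * K * x * r2| := abs_add_le _ _
      _ = p * (K * x) * |r1| + q * (K * x) * |r2| := by
          simp only [abs_mul, abs_of_nonneg hp, abs_of_nonneg hq,
            abs_of_pos hK, abs_of_pos hx]
          ring
      _ ≤ p * (K * x) * (16 * x ^ (β - 3) * (1 / K) ^ 3)
          + q * (K * x) * (16 * x ^ (β - 3) * (1 / K) ^ 3) := by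
          have h1 := mul_le_mul_of_nonneg_left hplus (by positivity : (0:Real) ≤ p * (K * x))
          have h2 := mul_le_mul_of_nonneg_left hminus (by positivity : (0:Real) ≤ q * (K * x))
          linarith
      _ = (p + q) * (K * x) * (16 * x ^ (β - 3) * (1 / K) ^ 3) := by ring
  refine htr.trans (le_of_eq ?_)
  rw [hb3]
  field_simp

set_option maxHeartbeats 1600000 in
/-- Component-wise bound on the domain. -/
lemma comp_bound {β α lam mu a c x₁ x₂ K : ℝ} (hβ0 : 0 < β) (hβ1 : β ≤ 1)
    (hα : 0 < α) (hlam : 0 ≤ lam) (hmu : 0 ≤ mu) (ha : 0 ≤ a) (hc : 0 ≤ c)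
    (h1 : α < x₁) (h2 : 0 < x₂) (h21 : α * x₂ ≤ x₁) (hK : 0 < K) (hKα : 1 / K ≤ α / 2) :
    |lam * K * x₁ * ((x₁ + 1 / K) ^ β - x₁ ^ β)
        + K * x₁ * (mu + a * x₁ + c * x₂) * ((x₁ - 1 / K) ^ β - x₁ ^ β)
        - β * x₁ ^ (β - 1) * (x₁ * ((lam - mu) - a * x₁ - c * x₂))
        - β * (β - 1) / (2 * K) * ((a * x₁ + c * x₂) * x₁ ^ (β - 1))|
      ≤ (9 * (lam + mu) + 8 * α * a + 8 * c) / K * x₁ ^ (β - 1) := by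
  have hx₁ : 0 < x₁ := hα.trans h1
  have hKx : 1 / K ≤ x₁ / 2 := hKα.trans (by linarith)
  have hq : 0 ≤ mu + a * x₁ + c * x₂ := by positivity
  have hb1 : x₁ ^ β = x₁ ^ (β - 1) * x₁ := by
    have := Real.rpow_add_one hx₁.ne' (β - 1)
    rwa [show β - 1 + 1 = β by ring] at this
  have hb2 : x₁ ^ (β - 1) = x₁ ^ (β - 2) * x₁ := by
    have := Real.rpow_add_one hx₁.ne' (β - 2)
    rwa [show β - 2 + 1 = β - 1 by ring] at this
  have hkey := keybound hβ0 hβ1 hx₁ hK hKx hlam hq (q := mu + a * x₁ + c * x₂)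
  -- rewrite the target expression as keybound expression + correction
  have hsplit : lam * K * x₁ * ((x₁ + 1 / K) ^ β - x₁ ^ β)
      + K * x₁ * (mu + a * x₁ + c * x₂) * ((x₁ - 1 / K) ^ β - x₁ ^ β)
      - β * x₁ ^ (β - 1) * (x₁ * ((lam - mu) - a * x₁ - c * x₂))
      - β * (β - 1) / (2 * K) * ((a * x₁ + c * x₂) * x₁ ^ (β - 1))
      = (lam * K * x₁ * ((x₁ + 1 / K) ^ β - x₁ ^ β)
        + (mu + a * x₁ + c * x₂) * K * x₁ * ((x₁ - 1 / K) ^ β - x₁ ^ β)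
        - β * x₁ ^ β * (lam - (mu + a * x₁ + c * x₂))
        - β * (β - 1) / (2 * K) * ((lam + (mu + a * x₁ + c * x₂)) * x₁ ^ (β - 1)))
        + β * (β - 1) / (2 * K) * ((lam + mu) * x₁ ^ (β - 1)) := by
    rw [hb1]; ring
  rw [hsplit]
  have hB : (0:ℝ) ≤ x₁ ^ (β - 1) := Real.rpow_nonneg hx₁.le _
  have hC2 : (0:ℝ) ≤ x₁ ^ (β - 2) := Real.rpow_nonneg hx₁.le _
  have hcorr : |β * (β - 1) / (2 * K) * ((lam + mu) * x₁ ^ (β - 1))|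
      ≤ (lam + mu) / K * x₁ ^ (β - 1) := by
    rw [abs_mul, abs_of_nonneg (by positivity : (0:ℝ) ≤ (lam + mu) * x₁ ^ (β - 1)),
      abs_div, abs_of_pos (by positivity : (0:ℝ) < 2 * K), abs_mul]
    have h3 : |β| * |β - 1| ≤ 1 := by
      rw [abs_of_pos hβ0, abs_of_nonpos (by linarith)]
      nlinarith
    rw [div_mul_eq_mul_div, div_mul_eq_mul_div, div_le_div_iff₀ (by positivity) (by positivity)]
    nlinarith [mul_nonneg (mul_nonneg (add_nonneg hlam hmu) hB) hK.le,
      abs_nonneg β, abs_nonneg (β - 1)]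
  have hαK : 2 ≤ α * K := by
    rw [div_le_div_iff₀ hK (by norm_num)] at hKα
    linarith
  have hx1K : 2 ≤ x₁ * K := by
    have := mul_nonneg (sub_nonneg.mpr h1.le) hK.le
    nlinarith [this]
  have hx1K2x2 : (0:ℝ) ≤ x₁ * K - 2 * x₂ := by
    have t1 := mul_nonneg (sub_nonneg.mpr h21) hK.le
    have t2 := mul_nonneg h2.le (sub_nonneg.mpr hαK)
    nlinarith [t1, t2]
  have hmain : 16 * (lam + (mu + a * x₁ + c * x₂)) ≤
      (8 * (lam + mu) + 8 * α * a + 8 * c) * (x₁ * K) := by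
    have t1 := mul_nonneg (mul_nonneg ha hx₁.le) (by linarith : (0:ℝ) ≤ α * K - 2)
    have t2 := mul_nonneg hc hx1K2x2
    have t3 := mul_nonneg (add_nonneg hlam hmu) (by linarith : (0:ℝ) ≤ x₁ * K - 2)
    nlinarith [t1, t2, t3]
  have hstep : 16 * (lam + (mu + a * x₁ + c * x₂)) / K ^ 2 * x₁ ^ (β - 2)
      ≤ (8 * (lam + mu) + 8 * α * a + 8 * c) / K * x₁ ^ (β - 1) := by
    rw [hb2, div_mul_eq_mul_div, div_mul_eq_mul_div,
      div_le_div_iff₀ (by positivity) (by positivity)]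
    calc 16 * (lam + (mu + a * x₁ + c * x₂)) * x₁ ^ (β - 2) * K
        = 16 * (lam + (mu + a * x₁ + c * x₂)) * (x₁ ^ (β - 2) * K) := by ring
      _ ≤ (8 * (lam + mu) + 8 * α * a + 8 * c) * (x₁ * K) * (x₁ ^ (β - 2) * K) :=
          mul_le_mul_of_nonneg_right hmain (by positivity)
      _ = (8 * (lam + mu) + 8 * α * a + 8 * c) * (x₁ ^ (β - 2) * x₁) * K ^ 2 := by ring
  refine (abs_add_le _ _).trans ?_
  have hfin : (8 * (lam + mu) + 8 * α * a + 8 * c) / K * x₁ ^ (β - 1)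
      + (lam + mu) / K * x₁ ^ (β - 1)
      = (9 * (lam + mu) + 8 * α * a + 8 * c) / K * x₁ ^ (β - 1) := by ring
  linarith

/-- `nrm2` is bounded by the sum of coordinate absolute values. -/
lemma nrm2_le_abs_add (u : ℝ × ℝ) : nrm2 u ≤ |u.1| + |u.2| := by
  rw [nrm2]
  have h : u.1 ^ 2 + u.2 ^ 2 ≤ (|u.1| + |u.2|) ^ 2 := by
    nlinarith [sq_abs u.1, sq_abs u.2, abs_nonneg u.1, abs_nonneg u.2,
      mul_nonneg (abs_nonneg u.1) (abs_nonneg u.2)]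
  calc Real.sqrt (u.1 ^ 2 + u.2 ^ 2) ≤ Real.sqrt ((|u.1| + |u.2|) ^ 2) := Real.sqrt_le_sqrt h
    _ = |u.1| + |u.2| := Real.sqrt_sq (by positivity)

/-- Comparison of a coordinate power with the norm power on the cone. -/
lemma coord_rpow_le {β α x₁ x₂ : ℝ} (hβ0 : 0 < β) (hβ1 : β ≤ 1) (hα : 0 < α)
    (h1 : α < x₁) (h2 : 0 < x₂) (h21 : α * x₂ ≤ x₁) :
    x₁ ^ (β - 1) ≤ (1 + 1 / α) * Real.sqrt (x₁ ^ 2 + x₂ ^ 2) ^ (β - 1) := by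
  have hx₁ : 0 < x₁ := hα.trans h1
  set n := Real.sqrt (x₁ ^ 2 + x₂ ^ 2) with hn
  have hn0 : 0 < n := Real.sqrt_pos.mpr (by positivity)
  have hnle : n ≤ (1 + 1 / α) * x₁ := by
    have h3 : n ≤ x₁ + x₂ := by
      rw [hn]
      calc Real.sqrt (x₁ ^ 2 + x₂ ^ 2) ≤ Real.sqrt ((x₁ + x₂) ^ 2) :=
            Real.sqrt_le_sqrt (by nlinarith)
        _ = x₁ + x₂ := Real.sqrt_sq (by positivity)
    have h4 : x₂ ≤ x₁ / α := by rw [le_div_iff₀ hα]; linarith [h21]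
    calc n ≤ x₁ + x₂ := h3
      _ ≤ x₁ + x₁ / α := by linarith
      _ = (1 + 1 / α) * x₁ := by field_simp
  set m : ℝ := α / (α + 1) with hm
  have hm0 : 0 < m := by positivity
  have hm1 : m ≤ 1 := by rw [hm, div_le_one (by linarith)]; linarith
  have hmn : m * n ≤ x₁ := by
    rw [hm]
    rw [div_mul_eq_mul_div, div_le_iff₀ (by linarith)]
    calc α * n ≤ α * ((1 + 1 / α) * x₁) := by nlinarith
      _ = x₁ * (α + 1) := by field_simp
  have step1 : x₁ ^ (β - 1) ≤ (m * n) ^ (β - 1) :=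
    Real.rpow_le_rpow_of_nonpos (by positivity) hmn (by linarith)
  have step2 : (m * n) ^ (β - 1) = m ^ (β - 1) * n ^ (β - 1) :=
    Real.mul_rpow hm0.le hn0.le
  have step3 : m ^ (β - 1) ≤ m ^ (-1 : ℝ) :=
    Real.rpow_le_rpow_of_exponent_ge hm0 hm1 (by linarith)
  have step4 : m ^ (-1 : ℝ) = 1 + 1 / α := by
    rw [Real.rpow_neg_one, hm]
    field_simp
  calc x₁ ^ (β - 1) ≤ m ^ (β - 1) * n ^ (β - 1) := by rw [← step2]; exact step1
    _ ≤ (1 + 1 / α) * n ^ (β - 1) := by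
        rw [← step4]
        exact mul_le_mul_of_nonneg_right step3 (Real.rpow_nonneg hn0.le _)

/-- First-order expansion of the compensator: uniform `(C/K)‖x‖^{β−1}` bound
on `𝔇_α` for `K ≥ 2/α`. -/

theorem stmt11 (lam₁ lam₂ mu₁ mu₂ a b c d : ℝ)
    (hlam₁ : 0 ≤ lam₁) (hlam₂ : 0 ≤ lam₂) (hmu₁ : 0 ≤ mu₁) (hmu₂ : 0 ≤ mu₂)
    (ha : 0 ≤ a) (hb : 0 ≤ b) (hc : 0 ≤ c) (hd : 0 ≤ d)
    (α : ℝ) (hα : 0 < α) (β : ℝ) (hβ : β ∈ Set.Ioc (0 : ℝ) 1) (γ : ℝ) (hγ : 0 < γ) :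
    ∃ C > 0, ∀ x ∈ Dfrak α, ∀ K : ℝ, 2 / α ≤ K →
      nrm2 (hKbd lam₁ lam₂ mu₁ mu₂ a b c d β γ K x
          - JFb lam₁ lam₂ mu₁ mu₂ a b c d β γ x - DeltaK a b c d β γ K x) ≤
        C / K * nrm2 x ^ (β - 1) := by
  obtain ⟨hβ0, hβ1⟩ := hβ
  set M₁ : ℝ := 9 * (lam₁ + mu₁) + 8 * α * a + 8 * c with hM₁
  set M₂ : ℝ := 9 * (lam₂ + mu₂) + 8 * α * b + 8 * d with hM₂
  have hM₁0 : 0 ≤ M₁ := by rw [hM₁]; positivity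
  have hM₂0 : 0 ≤ M₂ := by rw [hM₂]; positivity
  refine ⟨(1 + 1 / α) * (M₁ + γ * M₂) + 1, by positivity, ?_⟩
  intro x hx K hK
  obtain ⟨h1, h2, h21, h12⟩ := hx
  have hx₁ : 0 < x.1 := hα.trans h1
  have hx₂ : 0 < x.2 := hα.trans h2
  have hK0 : 0 < K := lt_of_lt_of_le (by positivity) hK
  have hKα : 1 / K ≤ α / 2 := by
    rw [div_le_div_iff₀ hK0 (by norm_num)]
    rw [div_le_iff₀ hα] at hK
    linarith
  set u := hKbd lam₁ lam₂ mu₁ mu₂ a b c d β γ K x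
      - JFb lam₁ lam₂ mu₁ mu₂ a b c d β γ x - DeltaK a b c d β γ K x with hu
  have hu1 : u.1 = lam₁ * K * x.1 * ((x.1 + 1 / K) ^ β - x.1 ^ β)
      + K * x.1 * (mu₁ + a * x.1 + c * x.2) * ((x.1 - 1 / K) ^ β - x.1 ^ β)
      - β * x.1 ^ (β - 1) * (x.1 * ((lam₁ - mu₁) - a * x.1 - c * x.2))
      - β * (β - 1) / (2 * K) * ((a * x.1 + c * x.2) * x.1 ^ (β - 1)) := by
    simp only [hu, hKbd, JFb, DeltaK, Prod.fst_sub]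
  have hu2 : u.2 = γ * (lam₂ * K * x.2 * ((x.2 + 1 / K) ^ β - x.2 ^ β)
      + K * x.2 * (mu₂ + b * x.2 + d * x.1) * ((x.2 - 1 / K) ^ β - x.2 ^ β)
      - β * x.2 ^ (β - 1) * (x.2 * ((lam₂ - mu₂) - b * x.2 - d * x.1))
      - β * (β - 1) / (2 * K) * ((b * x.2 + d * x.1) * x.2 ^ (β - 1))) := by
    simp only [hu, hKbd, JFb, DeltaK, Prod.snd_sub]
    ring
  have hcomp1 : |u.1| ≤ M₁ / K * x.1 ^ (β - 1) := by
    rw [hu1, hM₁]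
    exact comp_bound hβ0 hβ1 hα hlam₁ hmu₁ ha hc h1 hx₂ h21 hK0 hKα
  have hcomp2 : |u.2| ≤ γ * (M₂ / K * x.2 ^ (β - 1)) := by
    rw [hu2, abs_mul, abs_of_pos hγ, hM₂]
    exact mul_le_mul_of_nonneg_left
      (comp_bound hβ0 hβ1 hα hlam₂ hmu₂ hb hd h2 hx₁ h12 hK0 hKα) hγ.le
  have hn0 : 0 < nrm2 x := Real.sqrt_pos.mpr (by positivity)
  have hcoord1 : x.1 ^ (β - 1) ≤ (1 + 1 / α) * nrm2 x ^ (β - 1) :=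
    coord_rpow_le hβ0 hβ1 hα h1 hx₂ h21
  have hcoord2 : x.2 ^ (β - 1) ≤ (1 + 1 / α) * nrm2 x ^ (β - 1) := by
    have := coord_rpow_le hβ0 hβ1 hα h2 hx₁ h12
    rwa [show x.2 ^ 2 + x.1 ^ 2 = x.1 ^ 2 + x.2 ^ 2 by ring] at this
  have hnp : (0:ℝ) ≤ nrm2 x ^ (β - 1) := Real.rpow_nonneg hn0.le _
  have hMK1 : (0:ℝ) ≤ M₁ / K := by positivity
  have hMK2 : (0:ℝ) ≤ M₂ / K := by positivity
  calc nrm2 u ≤ |u.1| + |u.2| := nrm2_le_abs_add u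
    _ ≤ M₁ / K * x.1 ^ (β - 1) + γ * (M₂ / K * x.2 ^ (β - 1)) := add_le_add hcomp1 hcomp2
    _ ≤ M₁ / K * ((1 + 1 / α) * nrm2 x ^ (β - 1))
        + γ * (M₂ / K * ((1 + 1 / α) * nrm2 x ^ (β - 1))) := by
        gcongr
    _ = (1 + 1 / α) * (M₁ + γ * M₂) / K * nrm2 x ^ (β - 1) := by field_simp
    _ ≤ ((1 + 1 / α) * (M₁ + γ * M₂) + 1) / K * nrm2 x ^ (β - 1) := by
        gcongr
        linarith
end

section
/- Let α > 0, β ∈ (0,1] and γ > 0. There exists C > 0 such that for every x ∈ 𝔇_α and every K ≥ 2/α: ‖ b^K_{β,γ}(x) − b(x) ‖₂ ≤ (C/K) · ‖x‖₂, where b^K_{β,γ}(x) = J_{F_{β,γ}}(x)^{−1} h^K_{β,γ}(x) = ( h^{K,(1)}_{β,γ}(x)/(β x₁^{β−1}), h^{K,(2)}_{β,γ}(x)/(γ β x₂^{β−1}) ). -/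
open Real Set

/-- The competitive Lotka–Volterra vector field (with `τᵢ = λᵢ − μᵢ`). -/
noncomputable def bLVbd (lam₁ lam₂ mu₁ mu₂ a b c d : ℝ) (x : ℝ × ℝ) : ℝ × ℝ :=
  (x.1 * ((lam₁ - mu₁) - a * x.1 - c * x.2), x.2 * ((lam₂ - mu₂) - b * x.2 - d * x.1))

/-- The drift `b^K_{β,γ} = J_{F_{β,γ}}⁻¹ h^K_{β,γ}`. -/
noncomputable def bKbd (lam₁ lam₂ mu₁ mu₂ a b c d β γ K : ℝ) (x : ℝ × ℝ) : ℝ × ℝ :=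
  ((hKbd lam₁ lam₂ mu₁ mu₂ a b c d β γ K x).1 / (β * x.1 ^ (β - 1)),
   (hKbd lam₁ lam₂ mu₁ mu₂ a b c d β γ K x).2 / (γ * β * x.2 ^ (β - 1)))

/-- Bernoulli's inequality for exponents in `[-1, 0]`. -/
lemma bern_neg {s q : ℝ} (hs : -1 < s) (hq0 : -1 ≤ q) (hq1 : q ≤ 0) :
    1 + q * s ≤ (1 + s) ^ q := by
  have h1s : 0 < 1 + s := by linarith
  have hb : (1 + s) ^ (-q) ≤ 1 + (-q) * s :=
    rpow_one_add_le_one_add_mul_self hs.le (by linarith) (by linarith)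
  have hpos : 0 < (1 + s) ^ (-q) := rpow_pos_of_pos h1s _
  have heq : (1 + s) ^ q = ((1 + s) ^ (-q))⁻¹ := by
    rw [← rpow_neg h1s.le, neg_neg]
  rw [heq, ← one_div, le_div_iff₀ hpos]
  nlinarith [sq_nonneg (q * s), hpos]

/-- Tangent-line inequality for the concave function `u ↦ u^β`, `β ∈ (0,1]`. -/
lemma tangent_concave {β u v : ℝ} (hβ0 : 0 < β) (hβ1 : β ≤ 1) (hu : 0 < u) (hv : 0 ≤ v) :
    v ^ β ≤ u ^ β + β * u ^ (β - 1) * (v - u) := by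
  have hs : -1 ≤ v / u - 1 := by
    have : 0 ≤ v / u := div_nonneg hv hu.le
    linarith
  have key : (1 + (v / u - 1)) ^ β ≤ 1 + β * (v / u - 1) :=
    rpow_one_add_le_one_add_mul_self hs hβ0.le hβ1
  have h1 : (1 : ℝ) + (v / u - 1) = v / u := by ring
  rw [h1, div_rpow hv hu.le] at key
  have hub : 0 < u ^ β := rpow_pos_of_pos hu β
  have h2 : u ^ (β - 1) = u ^ β / u := rpow_sub_one hu.ne' β
  rw [h2]
  have := (div_le_iff₀ hub).mp key
  have h3 : (1 + β * (v / u - 1)) * u ^ β = u ^ β + β * (u ^ β / u) * (v - u) := by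
    field_simp
  linarith [h3 ▸ this]

/-- Tangent-line inequality for the convex function `u ↦ u^(β-1)`, `β ∈ (0,1]`. -/
lemma tangent_convex {β u v : ℝ} (hβ0 : 0 < β) (hβ1 : β ≤ 1) (hu : 0 < u) (hv : 0 < v) :
    u ^ (β - 1) + (β - 1) * u ^ (β - 2) * (v - u) ≤ v ^ (β - 1) := by
  have hs : -1 < v / u - 1 := by
    have : 0 < v / u := div_pos hv hu
    linarith
  have key : 1 + (β - 1) * (v / u - 1) ≤ (1 + (v / u - 1)) ^ (β - 1) :=
    bern_neg hs (by linarith) (by linarith)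
  have h1 : (1 : ℝ) + (v / u - 1) = v / u := by ring
  rw [h1, div_rpow hv.le hu.le] at key
  have hub : 0 < u ^ (β - 1) := rpow_pos_of_pos hu _
  have h2 : u ^ (β - 2) = u ^ (β - 1) / u := by
    have := rpow_sub_one hu.ne' (β - 1)
    rw [show β - 1 - 1 = β - 2 by ring] at this
    exact this
  rw [h2]
  have h3 : (1 + (β - 1) * (v / u - 1)) * u ^ (β - 1)
      = u ^ (β - 1) + (β - 1) * (u ^ (β - 1) / u) * (v - u) := by
    field_simp
  rw [le_div_iff₀ hub] at key
  linarith [h3 ▸ key]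

/-- Second-order error of the first-order Taylor expansion of `x ↦ x^β`. -/
lemma key_est {β x h : ℝ} (hβ0 : 0 < β) (hβ1 : β ≤ 1) (hx : 0 < x) (hxh : 0 < x + h) :
    |(x + h) ^ β - x ^ β - β * x ^ (β - 1) * h| ≤ β * (min x (x + h)) ^ (β - 2) * h ^ 2 := by
  have hmin : 0 < min x (x + h) := lt_min hx hxh
  have hRHS : 0 ≤ β * (min x (x + h)) ^ (β - 2) * h ^ 2 :=
    mul_nonneg (mul_nonneg hβ0.le (rpow_pos_of_pos hmin _).le) (sq_nonneg h)
  rw [abs_le]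
  constructor
  · -- lower bound
    have hlow := tangent_concave hβ0 hβ1 hxh (le_of_lt hx) (u := x + h) (v := x)
    -- x^β ≤ (x+h)^β + β (x+h)^(β-1) (x - (x+h))
    have h1 : (x + h) ^ β - x ^ β - β * x ^ (β - 1) * h
        ≥ β * h * ((x + h) ^ (β - 1) - x ^ (β - 1)) := by nlinarith [hlow]
    rcases le_or_gt 0 h with hh | hh
    · -- h ≥ 0 : min = x
      have hm : min x (x + h) = x := min_eq_left (by linarith)
      rw [hm]
      have ht := tangent_convex hβ0 hβ1 hx hxh (u := x) (v := x + h)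
      have hp2 : 0 < x ^ (β - 2) := rpow_pos_of_pos hx _
      have hintA : 0 ≤ (β * h) * ((x + h) ^ (β - 1) - x ^ (β - 1) - (β - 1) * x ^ (β - 2) * h) :=
        mul_nonneg (mul_nonneg hβ0.le hh) (by linarith [ht])
      have hintB : 0 ≤ (β * β) * x ^ (β - 2) * h ^ 2 :=
        mul_nonneg (mul_nonneg (mul_nonneg hβ0.le hβ0.le) hp2.le) (sq_nonneg h)
      nlinarith [h1, hintA, hintB]
    · -- h < 0 : min = x + h
      have hm : min x (x + h) = x + h := min_eq_right (by linarith)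
      rw [hm]
      have ht := tangent_convex hβ0 hβ1 hxh hx (u := x + h) (v := x)
      have hp2 : 0 < (x + h) ^ (β - 2) := rpow_pos_of_pos hxh _
      have hintA : 0 ≤ (β * (-h)) * ((1 - β) * (x + h) ^ (β - 2) * (-h)
          - ((x + h) ^ (β - 1) - x ^ (β - 1))) :=
        mul_nonneg (mul_nonneg hβ0.le (neg_nonneg.mpr hh.le)) (by nlinarith [ht])
      have hintB : 0 ≤ (β * β) * (x + h) ^ (β - 2) * h ^ 2 :=
        mul_nonneg (mul_nonneg (mul_nonneg hβ0.le hβ0.le) hp2.le) (sq_nonneg h)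
      nlinarith [h1, hintA, hintB]
  · -- upper bound: concavity gives E ≤ 0
    have hup := tangent_concave hβ0 hβ1 hx hxh.le (u := x) (v := x + h)
    nlinarith [hup]

/-- Normalized drift-error estimate: dividing by `β x^(β-1)`. -/
lemma ratio_est {β x h : ℝ} (hβ0 : 0 < β) (hβ1 : β ≤ 1) (hx : 0 < x) (hh : |h| ≤ x / 2) :
    |((x + h) ^ β - x ^ β) / (β * x ^ (β - 1)) - h| ≤ 4 * h ^ 2 / x := by
  have habs := abs_le.mp hh
  have hxh : 0 < x + h := by linarith
  have hden : 0 < β * x ^ (β - 1) := mul_pos hβ0 (rpow_pos_of_pos hx _)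
  have key := key_est hβ0 hβ1 hx hxh
  have hmin : x / 2 ≤ min x (x + h) := le_min (by linarith) (by linarith)
  have hx2 : 0 < x / 2 := by linarith
  -- (min)^(β-2) ≤ (x/2)^(β-2) ≤ 4 * x^(β-2)
  have hmono : (min x (x + h)) ^ (β - 2) ≤ (x / 2) ^ (β - 2) :=
    rpow_le_rpow_of_nonpos hx2 hmin (by linarith)
  have hhalf : (x / 2) ^ (β - 2) = x ^ (β - 2) * (2 : ℝ) ^ (2 - β) := by
    rw [div_eq_mul_inv, mul_rpow hx.le (by norm_num), ← rpow_neg_one (2 : ℝ),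
      ← rpow_mul (by norm_num : (0:ℝ) ≤ 2), show (-1:ℝ) * (β - 2) = 2 - β by ring]
  have h2b : (2 : ℝ) ^ (2 - β) ≤ 4 := by
    have : (2 : ℝ) ^ (2 - β) ≤ (2 : ℝ) ^ (2 : ℝ) :=
      rpow_le_rpow_of_exponent_le one_le_two (by linarith)
    have h4 : (2 : ℝ) ^ (2 : ℝ) = 4 := by
      rw [show (2 : ℝ) = ((2 : ℕ) : ℝ) by norm_num, rpow_natCast]; norm_num
    linarith
  have hxb2 : 0 < x ^ (β - 2) := rpow_pos_of_pos hx _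
  have hbound : (min x (x + h)) ^ (β - 2) ≤ 4 * x ^ (β - 2) := by
    calc (min x (x + h)) ^ (β - 2) ≤ x ^ (β - 2) * (2 : ℝ) ^ (2 - β) := hhalf ▸ hmono
    _ ≤ 4 * x ^ (β - 2) := by nlinarith
  have heq : ((x + h) ^ β - x ^ β) / (β * x ^ (β - 1)) - h
      = ((x + h) ^ β - x ^ β - β * x ^ (β - 1) * h) / (β * x ^ (β - 1)) := by
    field_simp
  rw [heq, abs_div, abs_of_pos hden, div_le_iff₀ hden]
  have hfinal : β * (min x (x + h)) ^ (β - 2) * h ^ 2 ≤ 4 * h ^ 2 / x * (β * x ^ (β - 1)) := by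
    have hrw : x ^ (β - 2) = x ^ (β - 1) / x := by
      have := rpow_sub_one hx.ne' (β - 1)
      rw [show β - 1 - 1 = β - 2 by ring] at this
      exact this
    have : 4 * h ^ 2 / x * (β * x ^ (β - 1)) = β * (4 * x ^ (β - 2)) * h ^ 2 := by
      rw [hrw]; field_simp
    rw [this]
    have := mul_le_mul_of_nonneg_left hbound hβ0.le
    nlinarith [sq_nonneg h]
  calc |(x + h) ^ β - x ^ β - β * x ^ (β - 1) * h|
      ≤ β * (min x (x + h)) ^ (β - 2) * h ^ 2 := key
    _ ≤ 4 * h ^ 2 / x * (β * x ^ (β - 1)) := hfinal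

/-- One-coordinate drift estimate. -/
lemma comp_est {β α K x : ℝ} (lam mu c₁ c₂ y : ℝ)
    (hβ0 : 0 < β) (hβ1 : β ≤ 1) (hα : 0 < α) (hx : α < x) (hK : 2 / α ≤ K)
    (hlam : 0 ≤ lam) (hM : 0 ≤ mu + c₁ * x + c₂ * y) :
    |(lam * K * x * ((x + 1 / K) ^ β - x ^ β)
        + K * x * (mu + c₁ * x + c₂ * y) * ((x - 1 / K) ^ β - x ^ β)) / (β * x ^ (β - 1))
      - x * ((lam - mu) - c₁ * x - c₂ * y)| ≤ 4 * (lam + (mu + c₁ * x + c₂ * y)) / K := by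
  have hx0 : 0 < x := hα.trans hx
  have hK0 : 0 < K := lt_of_lt_of_le (div_pos two_pos hα) hK
  have h1K : 1 / K ≤ α / 2 := by
    rw [div_le_div_iff₀ hK0 two_pos]
    nlinarith [(div_le_iff₀ hα).mp hK]
  have habs : |(1 : ℝ) / K| ≤ x / 2 := by
    rw [abs_of_pos (by positivity)]; linarith
  have habs' : |-(1 : ℝ) / K| ≤ x / 2 := by
    rw [neg_div, abs_neg]; exact habs
  have ep := ratio_est hβ0 hβ1 hx0 habs
  have em := ratio_est hβ0 hβ1 hx0 habs'
  rw [show x + -1 / K = x - 1 / K by ring] at em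
  have hden : 0 < β * x ^ (β - 1) := mul_pos hβ0 (rpow_pos_of_pos hx0 _)
  set M := mu + c₁ * x + c₂ * y with hMdef
  set u := ((x + 1 / K) ^ β - x ^ β) / (β * x ^ (β - 1)) - 1 / K with hu
  set v := ((x - 1 / K) ^ β - x ^ β) / (β * x ^ (β - 1)) - -1 / K with hv
  have expand : (lam * K * x * ((x + 1 / K) ^ β - x ^ β)
        + K * x * M * ((x - 1 / K) ^ β - x ^ β)) / (β * x ^ (β - 1))
      - x * ((lam - mu) - c₁ * x - c₂ * y)
      = lam * x * K * u + M * x * K * v := by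
    rw [hu, hv, hMdef]
    field_simp
    ring
  rw [expand]
  have hu4 : |u| ≤ 4 * (1 / K) ^ 2 / x := ep
  have hv4 : |v| ≤ 4 * (1 / K) ^ 2 / x := by
    have : (-1 / K) ^ 2 = (1 / K) ^ 2 := by ring
    rw [← this]; exact em
  have h1 : |lam * x * K * u| ≤ lam * x * K * (4 * (1 / K) ^ 2 / x) := by
    rw [abs_mul, abs_of_nonneg (by positivity : (0:ℝ) ≤ lam * x * K)]
    exact mul_le_mul_of_nonneg_left hu4 (by positivity)
  have h2 : |M * x * K * v| ≤ M * x * K * (4 * (1 / K) ^ 2 / x) := by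
    rw [abs_mul, abs_of_nonneg (by positivity : (0:ℝ) ≤ M * x * K)]
    exact mul_le_mul_of_nonneg_left hv4 (by positivity)
  have hcalc : ∀ t : ℝ, t * x * K * (4 * (1 / K) ^ 2 / x) = 4 * t / K := by
    intro t; field_simp
  calc |lam * x * K * u + M * x * K * v| ≤ |lam * x * K * u| + |M * x * K * v| := abs_add_le _ _
    _ ≤ lam * x * K * (4 * (1 / K) ^ 2 / x) + M * x * K * (4 * (1 / K) ^ 2 / x) := by
        linarith
    _ = 4 * (lam + M) / K := by rw [hcalc, hcalc]; ring

lemma fst_le_nrm2 {u : ℝ × ℝ} (h : 0 ≤ u.1) : u.1 ≤ nrm2 u := by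
  calc u.1 = Real.sqrt (u.1 ^ 2) := (Real.sqrt_sq h).symm
    _ ≤ Real.sqrt (u.1 ^ 2 + u.2 ^ 2) := Real.sqrt_le_sqrt (by nlinarith [sq_nonneg u.2])

lemma snd_le_nrm2 {u : ℝ × ℝ} (h : 0 ≤ u.2) : u.2 ≤ nrm2 u := by
  calc u.2 = Real.sqrt (u.2 ^ 2) := (Real.sqrt_sq h).symm
    _ ≤ Real.sqrt (u.1 ^ 2 + u.2 ^ 2) := Real.sqrt_le_sqrt (by nlinarith [sq_nonneg u.1])

set_option maxHeartbeats 1000000 in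
/-- `‖b^K_{β,γ}(x) − b(x)‖₂ ≤ (C/K)‖x‖₂` uniformly on `𝔇_α` for `K ≥ 2/α`. -/
theorem stmt12 (lam₁ lam₂ mu₁ mu₂ a b c d : ℝ)
    (hlam₁ : 0 ≤ lam₁) (hlam₂ : 0 ≤ lam₂) (hmu₁ : 0 ≤ mu₁) (hmu₂ : 0 ≤ mu₂)
    (ha : 0 ≤ a) (hb : 0 ≤ b) (hc : 0 ≤ c) (hd : 0 ≤ d)
    (α : ℝ) (hα : 0 < α) (β : ℝ) (hβ : β ∈ Set.Ioc (0 : ℝ) 1) (γ : ℝ) (hγ : 0 < γ) :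
    ∃ C > 0, ∀ x ∈ Dfrak α, ∀ K : ℝ, 2 / α ≤ K →
      nrm2 (bKbd lam₁ lam₂ mu₁ mu₂ a b c d β γ K x
          - bLVbd lam₁ lam₂ mu₁ mu₂ a b c d x) ≤ C / K * nrm2 x := by
  obtain ⟨hβ0, hβ1⟩ := hβ
  set C₁ : ℝ := 4 * ((lam₁ + mu₁) / α + a + c) with hC₁
  set C₂ : ℝ := 4 * ((lam₂ + mu₂) / α + b + d) with hC₂
  have hq1 : 0 ≤ (lam₁ + mu₁) / α := div_nonneg (by linarith) hα.le
  have hq2 : 0 ≤ (lam₂ + mu₂) / α := div_nonneg (by linarith) hα.le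
  have hC₁0 : 0 ≤ C₁ := by rw [hC₁]; linarith
  have hC₂0 : 0 ≤ C₂ := by rw [hC₂]; linarith
  refine ⟨2 * (C₁ + C₂) + 1, by linarith, ?_⟩
  rintro x ⟨hx1, hx2, -, -⟩ K hK
  have hx10 : 0 < x.1 := hα.trans hx1
  have hx20 : 0 < x.2 := hα.trans hx2
  have hK0 : 0 < K := lt_of_lt_of_le (div_pos two_pos hα) hK
  have hM1 : 0 ≤ mu₁ + a * x.1 + c * x.2 :=
    add_nonneg (add_nonneg hmu₁ (mul_nonneg ha hx10.le)) (mul_nonneg hc hx20.le)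
  have hM2 : 0 ≤ mu₂ + b * x.2 + d * x.1 :=
    add_nonneg (add_nonneg hmu₂ (mul_nonneg hb hx20.le)) (mul_nonneg hd hx10.le)
  have habs1 : |(bKbd lam₁ lam₂ mu₁ mu₂ a b c d β γ K x
      - bLVbd lam₁ lam₂ mu₁ mu₂ a b c d x).1|
      ≤ 4 * (lam₁ + (mu₁ + a * x.1 + c * x.2)) / K := by
    simpa only [Prod.fst_sub, bKbd, bLVbd, hKbd] using
      comp_est lam₁ mu₁ a c x.2 hβ0 hβ1 hα hx1 hK hlam₁ hM1
  have h2eq : ∀ A B M : ℝ,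
      (γ * lam₂ * K * x.2 * A + γ * K * x.2 * M * B) / (γ * β * x.2 ^ (β - 1))
      = (lam₂ * K * x.2 * A + K * x.2 * M * B) / (β * x.2 ^ (β - 1)) := by
    intro A B M
    rw [show γ * lam₂ * K * x.2 * A + γ * K * x.2 * M * B
        = γ * (lam₂ * K * x.2 * A + K * x.2 * M * B) by ring,
      mul_assoc γ β, mul_div_mul_left _ _ hγ.ne']
  have habs2 : |(bKbd lam₁ lam₂ mu₁ mu₂ a b c d β γ K x
      - bLVbd lam₁ lam₂ mu₁ mu₂ a b c d x).2|
      ≤ 4 * (lam₂ + (mu₂ + b * x.2 + d * x.1)) / K := by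
    have hce := comp_est lam₂ mu₂ b d x.1 hβ0 hβ1 hα hx2 hK hlam₂ hM2
    simp only [Prod.snd_sub, bKbd, bLVbd, hKbd]
    rw [h2eq]
    exact hce
  set N : ℝ := nrm2 x with hN
  have hN1 : x.1 ≤ N := fst_le_nrm2 hx10.le
  have hN2 : x.2 ≤ N := snd_le_nrm2 hx20.le
  have hN0 : 0 < N := hx10.trans_le hN1
  have hL1 : lam₁ + mu₁ ≤ (lam₁ + mu₁) / α * x.1 := by
    rw [div_mul_eq_mul_div, le_div_iff₀ hα]
    nlinarith
  have hL2 : lam₂ + mu₂ ≤ (lam₂ + mu₂) / α * x.2 := by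
    rw [div_mul_eq_mul_div, le_div_iff₀ hα]
    nlinarith
  have hA1 : 4 * (lam₁ + (mu₁ + a * x.1 + c * x.2)) ≤ C₁ * N := by
    have h1 : (lam₁ + mu₁) / α * x.1 ≤ (lam₁ + mu₁) / α * N := mul_le_mul_of_nonneg_left hN1 hq1
    have h2 : a * x.1 ≤ a * N := mul_le_mul_of_nonneg_left hN1 ha
    have h3 : c * x.2 ≤ c * N := mul_le_mul_of_nonneg_left hN2 hc
    rw [hC₁]; nlinarith
  have hA2 : 4 * (lam₂ + (mu₂ + b * x.2 + d * x.1)) ≤ C₂ * N := by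
    have h1 : (lam₂ + mu₂) / α * x.2 ≤ (lam₂ + mu₂) / α * N := mul_le_mul_of_nonneg_left hN2 hq2
    have h2 : b * x.2 ≤ b * N := mul_le_mul_of_nonneg_left hN2 hb
    have h3 : d * x.1 ≤ d * N := mul_le_mul_of_nonneg_left hN1 hd
    rw [hC₂]; nlinarith
  calc nrm2 (bKbd lam₁ lam₂ mu₁ mu₂ a b c d β γ K x - bLVbd lam₁ lam₂ mu₁ mu₂ a b c d x)
      ≤ |(bKbd lam₁ lam₂ mu₁ mu₂ a b c d β γ K x - bLVbd lam₁ lam₂ mu₁ mu₂ a b c d x).1|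
        + |(bKbd lam₁ lam₂ mu₁ mu₂ a b c d β γ K x
            - bLVbd lam₁ lam₂ mu₁ mu₂ a b c d x).2| := nrm2_le_abs_add _
    _ ≤ 4 * (lam₁ + (mu₁ + a * x.1 + c * x.2)) / K
        + 4 * (lam₂ + (mu₂ + b * x.2 + d * x.1)) / K := by linarith
    _ ≤ (2 * (C₁ + C₂) + 1) / K * N := by
        rw [← add_div, div_mul_eq_mul_div, div_le_div_iff₀ hK0 hK0]
        nlinarith [hN0.le]
end
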